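/- arXiv:math/0109079 — 6 statements merged into one kernel-verified Lean document; each statement's English description precedes it below -/
import Mathlib

section
/- For every real q ≥ 2 and every integer d ≥ 1, 1 - 1/q - 1/q^2 ≤ ∏_{i=1}^d (1 - 1/q^i). -/
open Finset

noncomputable section

/-- The q-Pochhammer-type product `(1/q)_m = ∏_{k=1}^m (1 - 1/q^k)`. -/
def qPoch (q : ℝ) (m : ℕ) : ℝ := ∏ k ∈ Finset.Icc 1 m, (1 - 1/q^k)

/-- `conjPart l j = λ'_j`, the `j`-th part of the conjugate partition
(the number of parts of `l` that are at least `j`). -/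
def conjPart {n : ℕ} (l : n.Partition) (j : ℕ) : ℕ :=
  Multiset.countP (fun p => j ≤ p) l.parts

/-- `rowLen l i = λ_i`, the `i`-th largest part of `l` (1-indexed, `0` if `i` exceeds
the number of parts). -/
def rowLen {n : ℕ} (l : n.Partition) (i : ℕ) : ℕ :=
  ((Finset.Icc 1 n).filter (fun j => i ≤ conjPart l j)).card

/-- The Young diagram of `l`, as the set of cells `(i,j)` (row `i`, column `j`,
both 1-indexed) with `1 ≤ j ≤ λ_i`. -/
def cells {n : ℕ} (l : n.Partition) : Finset (ℕ × ℕ) :=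
  (Finset.Icc 1 n ×ˢ Finset.Icc 1 n).filter (fun s => s.2 ≤ rowLen l s.1)

/-- The arm length `a(s) = λ_i - j` of the cell `s = (i,j)`. -/
def arm {n : ℕ} (l : n.Partition) (s : ℕ × ℕ) : ℕ := rowLen l s.1 - s.2

/-- The leg length `l(s) = λ'_j - i` of the cell `s = (i,j)`. -/
def leg {n : ℕ} (l : n.Partition) (s : ℕ × ℕ) : ℕ := conjPart l s.2 - s.1

/-- The hook length `h(s) = a(s) + l(s) + 1` of the cell `s`. -/
def hookLen {n : ℕ} (l : n.Partition) (s : ℕ × ℕ) : ℕ := arm l s + leg l s + 1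

/-- `n(λ) = ∑_i (i-1) λ_i`. -/
def nStat {n : ℕ} (l : n.Partition) : ℕ := ∑ i ∈ Finset.Icc 1 n, (i - 1) * rowLen l i

/-- The multiplicity `m_j(λ)` of `j` as a part of `l`. -/
def mult {n : ℕ} (l : n.Partition) (j : ℕ) : ℕ := Multiset.count j l.parts

/-- The denominator `∏_j q^{(λ'_j)^2} (1/q)_{m_j(λ)}` appearing in the measure `P_{n,q}`. -/
def Pden (q : ℝ) {n : ℕ} (l : n.Partition) : ℝ :=
  ∏ j ∈ Finset.Icc 1 n, q ^ ((conjPart l j)^2) * qPoch q (mult l j)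

/-- The measure `P_{n,q}(λ) = q^n (1/q)_n / ∏_j q^{(λ'_j)^2} (1/q)_{m_j(λ)}`. -/
def Pmeas (q : ℝ) {n : ℕ} (l : n.Partition) : ℝ := q^n * qPoch q n / Pden q l

/-- `z(n,q)`: the coefficient of `u^n` in the formal expansion of
`∏_{i≥1} ∏_{j≥0} 1/(1 - u/q^{i+j})`, obtained by expanding each factor
as a geometric series and collecting terms of total degree `n`. -/
def zCoeff (n : ℕ) (q : ℝ) : ℝ :=
  ∑' f : {f : (ℕ × ℕ) →₀ ℕ // (f.sum fun _ k => k) = n},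
    ∏ p ∈ (f : (ℕ × ℕ) →₀ ℕ).support,
      ((1 : ℝ) / q ^ ((p.1 + 1) + p.2)) ^ ((f : (ℕ × ℕ) →₀ ℕ) p)

/-- The measure `Q_{n,q}(λ) = (1/z(n,q)) / (q^{|λ|+2n(λ)} ∏_{s∈λ} (1-1/q^{h(s)})^2)`. -/
def Qmeas (q : ℝ) {n : ℕ} (l : n.Partition) : ℝ :=
  (1 / zCoeff n q) *
    (1 / (q ^ (n + 2 * nStat l) * ∏ s ∈ cells l, (1 - 1/q^(hookLen l s))^2))

/-- `P_{n,q}^r`: the `P_{n,q}`-probability that the largest part of `λ` is `< r`. -/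
def Ptail (n : ℕ) (q : ℝ) (r : ℕ) : ℝ :=
  ∑ l ∈ Finset.univ.filter (fun l : n.Partition => ∀ p ∈ l.parts, p < r), Pmeas q l

end
theorem stmt1 (q : ℝ) (hq : 2 ≤ q) (d : ℕ) (hd : 1 ≤ d) :
    1 - 1/q - 1/q^2 ≤ ∏ i ∈ Finset.Icc 1 d, (1 - 1/q^i) := by
  have hq0 : (0:ℝ) < q := by linarith
  have hq1 : (1:ℝ) ≤ q := by linarith
  have key : 1 - 1/q - 1/q^2 + 1/q^(d+1) ≤ ∏ i ∈ Finset.Icc 1 d, (1 - 1/q^i) := by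
    induction d, hd using Nat.le_induction with
    | base =>
      rw [Finset.Icc_self, Finset.prod_singleton]
      ring_nf
      norm_num
    | succ n hn ih =>
      rw [Finset.prod_Icc_succ_top (by omega)]
      have hpn : (0:ℝ) < q^(n+1) := pow_pos hq0 _
      have hpn2 : (0:ℝ) < q^(n+2) := pow_pos hq0 _
      have hq2 : (0:ℝ) < q^2 := pow_pos hq0 _
      have hle : q^2 ≤ q^(n+1) := pow_le_pow_right₀ hq1 (by omega)
      have hε2 : 1/q^(n+1) ≤ 1/q^2 := by
        apply one_div_le_one_div_of_le hq2 hle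
      have hεq : 1/q^(n+2) = (1/q^(n+1)) * (1/q) := by
        rw [pow_succ]; ring
      have hεpos : (0:ℝ) < 1/q^(n+1) := by positivity
      have h1q : 1/q ≤ 1/2 := by
        apply one_div_le_one_div_of_le <;> linarith
      have h1q2 : 1/q^2 ≤ 1/4 := by
        apply one_div_le_one_div_of_le <;> nlinarith
      have hc : (0:ℝ) ≤ 1 - 1/q - 1/q^2 := by linarith
      have h1ε : (0:ℝ) ≤ 1 - 1/q^(n+1) := by
        have : 1/q^(n+1) ≤ 1 := by
          apply div_le_one_of_le₀ <;> nlinarith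
        linarith
      rw [hεq]
      nlinarith [mul_le_mul_of_nonneg_right ih h1ε]
  have hpos : (0:ℝ) < 1/q^(d+1) := by positivity
  linarith
end

section
/- For real q ≥ 2, the double infinite product ∏_{i=1}^∞ ∏_{j=0}^∞ (1 - 1/q^{i+j}) is at least (1 - 1/q)^4. -/
open Finset

section myaux
open Finset

private lemma my_sum_pow_le {x : ℝ} (hx0 : 0 ≤ x) (hx1 : x < 1) (m : ℕ) (t : Finset ℕ)
    (ht : ∀ i ∈ t, m ≤ i) : ∑ i ∈ t, x ^ i ≤ x ^ m / (1 - x) := by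
  have hsum : Summable (fun j : ℕ => x ^ m * x ^ j) :=
    (summable_geometric_of_lt_one hx0 hx1).mul_left _
  have himg : ∑ j ∈ t.image (· - m), x ^ m * x ^ j = ∑ i ∈ t, x ^ i := by
    rw [Finset.sum_image (by intro a ha b hb hab; have := ht a ha; have := ht b hb; simp only at hab; omega)]
    exact Finset.sum_congr rfl fun i hi => by
      rw [← pow_add, Nat.add_sub_cancel' (ht i hi)]
  calc ∑ i ∈ t, x ^ i = ∑ j ∈ t.image (· - m), x ^ m * x ^ j := himg.symm
    _ ≤ ∑' j : ℕ, x ^ m * x ^ j :=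
        Summable.sum_le_tsum _ (fun j _ => by positivity) hsum
    _ = x ^ m * (1 - x)⁻¹ := by rw [tsum_mul_left, tsum_geometric_of_lt_one hx0 hx1]
    _ = x ^ m / (1 - x) := by rw [div_eq_mul_inv]

private lemma my_prod_one_sub_ge (t : Finset ℕ) (e : ℕ → ℝ) (h0 : ∀ i ∈ t, 0 ≤ e i)
    (h1 : ∀ i ∈ t, e i ≤ 1) : 1 - ∑ i ∈ t, e i ≤ ∏ i ∈ t, (1 - e i) := by
  classical
  induction t using Finset.induction_on with
  | empty => simp
  | @insert a s ha ih =>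
    rw [Finset.sum_insert ha, Finset.prod_insert ha]
    have h0' : ∀ i ∈ s, 0 ≤ e i := fun i hi => h0 i (Finset.mem_insert_of_mem hi)
    have h1' : ∀ i ∈ s, e i ≤ 1 := fun i hi => h1 i (Finset.mem_insert_of_mem hi)
    have hea : 0 ≤ e a := h0 a (Finset.mem_insert_self a s)
    have hea1 : e a ≤ 1 := h1 a (Finset.mem_insert_self a s)
    have hs0 : 0 ≤ ∑ i ∈ s, e i := Finset.sum_nonneg h0'
    have hih := ih h0' h1'
    calc 1 - (e a + ∑ i ∈ s, e i) ≤ (1 - e a) * (1 - ∑ i ∈ s, e i) := by nlinarith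
      _ ≤ (1 - e a) * ∏ i ∈ s, (1 - e i) := by nlinarith

private lemma my_aux1 {x : ℝ} (hx0 : 0 ≤ x) (hx : x ≤ 1/2) (m : ℕ) (t : Finset ℕ)
    (ht : ∀ i ∈ t, m ≤ i) : 1 - x ^ m / (1 - x) ≤ ∏ i ∈ t, (1 - x ^ i) := by
  have hx1 : x < 1 := by linarith
  calc 1 - x ^ m / (1 - x) ≤ 1 - ∑ i ∈ t, x ^ i := by
        linarith [my_sum_pow_le hx0 hx1 m t ht]
    _ ≤ ∏ i ∈ t, (1 - x ^ i) :=
        my_prod_one_sub_ge t _ (fun i _ => by positivity)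
          (fun i _ => by nlinarith [pow_le_one₀ hx0 hx1.le (n := i)])

private lemma my_aux2 {x : ℝ} (hx0 : 0 ≤ x) (hx : x ≤ 1/2) (t : Finset ℕ)
    (ht : ∀ i ∈ t, 1 ≤ i) : (1 - x) ^ 2 ≤ ∏ i ∈ t, (1 - x ^ i) := by
  classical
  have hx1 : x < 1 := by linarith
  have h2 : ∀ i ∈ t.erase 1, 2 ≤ i := by
    intro i hi
    have h1 := Finset.mem_of_mem_erase hi
    have hne := Finset.ne_of_mem_erase hi
    have := ht i h1; omega
  have hp' : 1 - x ^ 2 / (1 - x) ≤ ∏ i ∈ t.erase 1, (1 - x ^ i) := my_aux1 hx0 hx 2 _ h2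
  have hdiv : x ^ 2 / (1 - x) ≤ x := by
    rw [div_le_iff₀ (by linarith)]; nlinarith
  have hge : 1 - x ≤ ∏ i ∈ t.erase 1, (1 - x ^ i) := by linarith
  by_cases h1t : 1 ∈ t
  · rw [← Finset.mul_prod_erase t _ h1t, pow_one]
    nlinarith
  · rw [Finset.erase_eq_of_notMem h1t] at hge
    nlinarith

end myaux
theorem stmt3 (q : ℝ) (hq : 2 ≤ q) :
    (1 - 1/q)^4 ≤ ∏' i : ℕ, ∏' j : ℕ, (1 - 1/q^((i + 1) + j)) := by
  have hq0 : 0 < q := by linarith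
  simp only [← one_div_pow]
  set x := 1/q with hxdef
  have hx0 : 0 < x := by positivity
  have hx : x ≤ 1/2 := by
    rw [hxdef, div_le_div_iff₀ hq0 (by norm_num)]; linarith
  have hx1 : x < 1 := by linarith
  set L : ℕ → ℝ := fun i => if i = 0 then (1 - x)^2 else 1 - x ^ i with hLdef
  have hL0 : ∀ i, 0 ≤ L i := by
    intro i
    simp only [hLdef]
    split
    · positivity
    · nlinarith [pow_le_one₀ hx0.le hx1.le (n := i)]
  have hLle : ∀ i, L i ≤ 1 := by
    intro i
    simp only [hLdef]
    split
    · nlinarith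
    · nlinarith [pow_nonneg hx0.le i]
  have hQlb : ∀ i : ℕ, L i ≤ ∏' j : ℕ, (1 - x ^ ((i + 1) + j)) := by
    intro i
    by_cases hm : Multipliable (fun j : ℕ => 1 - x ^ ((i + 1) + j))
    · refine ge_of_tendsto' hm.hasProd fun s => ?_
      have himg : ∏ j ∈ s, (1 - x ^ ((i + 1) + j))
          = ∏ k ∈ s.image ((i + 1) + ·), (1 - x ^ k) := by
        rw [Finset.prod_image (by intro a _ b _ hab; simp only at hab; omega)]
      rw [himg]
      rcases Nat.eq_zero_or_pos i with hi | hi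
      · subst hi
        simp only [hLdef, if_pos rfl]
        refine my_aux2 hx0.le hx _ fun k hk => ?_
        rcases Finset.mem_image.mp hk with ⟨a, _, rfl⟩; omega
      · have hik : ∀ k ∈ s.image ((i + 1) + ·), i + 1 ≤ k := by
          intro k hk; rcases Finset.mem_image.mp hk with ⟨a, _, rfl⟩; omega
        have h1 := my_aux1 hx0.le hx (i + 1) _ hik
        have hdiv : x ^ (i + 1) / (1 - x) ≤ x ^ i := by
          rw [div_le_iff₀ (by linarith), pow_succ]
          nlinarith [pow_nonneg hx0.le i]
        simp only [hLdef, if_neg (Nat.pos_iff_ne_zero.mp hi)]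
        linarith
    · rw [tprod_eq_one_of_not_multipliable hm]
      exact hLle i
  by_cases hm : Multipliable (fun i : ℕ => ∏' j : ℕ, (1 - x ^ ((i + 1) + j)))
  · refine ge_of_tendsto' hm.hasProd fun s => ?_
    have hstep : (1 - x)^4 ≤ ∏ i ∈ s, L i := by
      classical
      have herase : (1 - x)^2 ≤ ∏ i ∈ s.erase 0, L i := by
        have hcongr : ∏ i ∈ s.erase 0, L i = ∏ i ∈ s.erase 0, (1 - x ^ i) :=
          Finset.prod_congr rfl fun i hi => by
            simp only [hLdef, if_neg (Finset.ne_of_mem_erase hi)]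
        rw [hcongr]
        exact my_aux2 hx0.le hx _ fun i hi => Nat.one_le_iff_ne_zero.mpr (Finset.ne_of_mem_erase hi)
      by_cases h0s : 0 ∈ s
      · rw [← Finset.mul_prod_erase s L h0s]
        simp only [hLdef, if_pos rfl]
        nlinarith [sq_nonneg (1 - x)]
      · rw [Finset.erase_eq_of_notMem h0s] at herase
        have hy : (1 - x)^2 ≤ 1 := by nlinarith
        nlinarith [sq_nonneg (1 - x)]
    refine hstep.trans (Finset.prod_le_prod (fun i _ => hL0 i) fun i _ => hQlb i)
  · rw [tprod_eq_one_of_not_multipliable hm]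
    have hy : (1 - x)^2 ≤ 1 := by nlinarith
    nlinarith [sq_nonneg (1 - x)]
end

section
/- For a partition λ of n and any fixed positive integer h, the number of cells s in the Young diagram of λ whose hook length equals h is at most √(2n). -/
open Finset

lemma conjPart_anti {n : ℕ} (l : n.Partition) {j j' : ℕ} (hj : j ≤ j') :
    conjPart l j' ≤ conjPart l j :=
  by
  simp only [conjPart, Multiset.countP_eq_card_filter]
  exact Multiset.card_le_card (Multiset.monotone_filter_right _ (fun p hp => le_trans hj hp))

lemma rowLen_anti {n : ℕ} (l : n.Partition) {i i' : ℕ} (hi : i ≤ i') :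
    rowLen l i' ≤ rowLen l i := by
  apply Finset.card_le_card
  intro j hj
  simp only [mem_filter] at *
  exact ⟨hj.1, le_trans hi hj.2⟩

lemma galois {n : ℕ} (l : n.Partition) (i : ℕ) {j : ℕ} (hj1 : 1 ≤ j) (hjn : j ≤ n) :
    j ≤ rowLen l i ↔ i ≤ conjPart l j := by
  constructor
  · intro hle
    by_contra hc
    push_neg at hc
    have hsub : ((Finset.Icc 1 n).filter (fun j' => i ≤ conjPart l j')) ⊆ Finset.Icc 1 (j-1) := by
      intro x hx
      simp only [mem_filter, mem_Icc] at *
      refine ⟨hx.1.1, ?_⟩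
      by_contra hx2
      push_neg at hx2
      have : conjPart l x ≤ conjPart l j := conjPart_anti l (by omega)
      omega
    have := Finset.card_le_card hsub
    simp only [Nat.card_Icc] at this
    unfold rowLen at hle
    omega
  · intro hle
    have hsub : Finset.Icc 1 j ⊆ ((Finset.Icc 1 n).filter (fun j' => i ≤ conjPart l j')) := by
      intro x hx
      simp only [mem_filter, mem_Icc] at *
      exact ⟨⟨hx.1, le_trans hx.2 hjn⟩, le_trans hle (conjPart_anti l hx.2)⟩
    have := Finset.card_le_card hsub
    simpa [rowLen] using this

lemma mem_cells_facts {n : ℕ} (l : n.Partition) {s : ℕ × ℕ} (hs : s ∈ cells l) :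
    1 ≤ s.1 ∧ s.1 ≤ n ∧ 1 ≤ s.2 ∧ s.2 ≤ n ∧ s.2 ≤ rowLen l s.1 ∧ s.1 ≤ conjPart l s.2 := by
  simp only [cells, mem_filter, mem_product, mem_Icc] at hs
  obtain ⟨⟨⟨h1,h2⟩,⟨h3,h4⟩⟩,h5⟩ := hs
  exact ⟨h1, h2, h3, h4, h5, (galois l s.1 h3 h4).mp h5⟩

lemma hook_eq {n : ℕ} (l : n.Partition) {s : ℕ × ℕ} (hs : s ∈ cells l) :
    hookLen l s + s.1 + s.2 = rowLen l s.1 + conjPart l s.2 + 1 := by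
  obtain ⟨h1,h2,h3,h4,h5,h6⟩ := mem_cells_facts l hs
  simp only [hookLen, arm, leg]
  omega

lemma parts_le {n : ℕ} (l : n.Partition) {p : ℕ} (hp : p ∈ l.parts) : p ≤ n := by
  have := l.parts_sum
  calc p ≤ l.parts.sum := Multiset.le_sum_of_mem hp -- guess
  _ = n := this

lemma conjPart_le {n : ℕ} (l : n.Partition) (j : ℕ) : conjPart l j ≤ n := by
  have h1 : conjPart l j ≤ Multiset.card l.parts := Multiset.countP_le_card _ _
  have h2 : Multiset.card l.parts ≤ l.parts.sum := by
    have := Multiset.card_nsmul_le_sum (s := l.parts) (a := 1) (fun x hx => l.parts_pos hx)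
    simpa using this
  have := l.parts_sum
  omega

lemma sum_rowLen {n : ℕ} (l : n.Partition) : ∑ i ∈ Finset.Icc 1 n, rowLen l i = n := by
  have key : ∑ i ∈ Finset.Icc 1 n, rowLen l i = ∑ j ∈ Finset.Icc 1 n, conjPart l j := by
    simp only [rowLen, Finset.card_filter]
    rw [Finset.sum_comm]
    refine Finset.sum_congr rfl fun j hj => ?_
    rw [← Finset.card_filter]
    have : (Finset.Icc 1 n).filter (fun x => x ≤ conjPart l j) = Finset.Icc 1 (conjPart l j) := by
      ext x
      simp only [mem_filter, mem_Icc]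
      have := conjPart_le l j
      omega
    rw [this, Nat.card_Icc]; omega
  rw [key]
  -- now sum of conjugate parts over [1,n] equals sum of parts = n
  have key2 : ∀ (m : Multiset ℕ), (∀ p ∈ m, 1 ≤ p ∧ p ≤ n) →
      ∑ j ∈ Finset.Icc 1 n, Multiset.countP (fun p => j ≤ p) m = m.sum := by
    intro m
    induction m using Multiset.induction with
    | empty => simp
    | cons a t ih =>
      intro hmem
      have ha := hmem a (Multiset.mem_cons_self a t)
      have ht : ∀ p ∈ t, 1 ≤ p ∧ p ≤ n := fun p hp => hmem p (Multiset.mem_cons_of_mem hp)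
      simp only [Multiset.countP_cons, Multiset.sum_cons]
      rw [Finset.sum_add_distrib, ih ht]
      have : ∑ j ∈ Finset.Icc 1 n, (if j ≤ a then 1 else 0) = a := by
        rw [← Finset.card_filter]
        have : (Finset.Icc 1 n).filter (fun x => x ≤ a) = Finset.Icc 1 a := by
          ext x
          simp only [mem_filter, mem_Icc]
          omega
        rw [this, Nat.card_Icc]; omega
      omega
  have := key2 l.parts (fun p hp => ⟨l.parts_pos hp, parts_le l hp⟩)
  simp only [conjPart]
  rw [this, l.parts_sum]

lemma step3 {n : ℕ} (l : n.Partition) (h : ℕ) {s t : ℕ × ℕ} (hs : s ∈ cells l) (ht : t ∈ cells l)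
    (es : hookLen l s = h) (et : hookLen l t = h) (hlt : s.1 < t.1) : t.2 < s.2 := by
  by_contra hc
  push_neg at hc
  have h1 := hook_eq l hs
  have h2 := hook_eq l ht
  have h3 : rowLen l t.1 ≤ rowLen l s.1 := rowLen_anti l (le_of_lt hlt)
  have h4 : conjPart l t.2 ≤ conjPart l s.2 := conjPart_anti l hc
  omega

lemma rowinj {n : ℕ} (l : n.Partition) (h : ℕ) {s t : ℕ × ℕ} (hs : s ∈ cells l) (ht : t ∈ cells l)
    (es : hookLen l s = h) (et : hookLen l t = h) (he : s.1 = t.1) : s = t := by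
  have h1 := hook_eq l hs
  have h2 := hook_eq l ht
  rcases lt_trichotomy s.2 t.2 with hl | hl | hl
  · exfalso
    have h4 := conjPart_anti l (le_of_lt hl)
    rw [he] at h1; omega
  · exact Prod.ext he hl
  · exfalso
    have h4 := conjPart_anti l (le_of_lt hl)
    rw [he] at h1; omega


theorem stmt7 (n : ℕ) (l : n.Partition) (h : ℕ) (hh : 1 ≤ h) :
    (((cells l).filter (fun s => hookLen l s = h)).card : ℝ) ≤ Real.sqrt (2 * n) := by
  set T := (cells l).filter (fun s => hookLen l s = h) with hT
  have hmem : ∀ s ∈ T, s ∈ cells l ∧ hookLen l s = h := by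
    intro s hs; simpa [hT, mem_filter] using hs
  set k := T.card with hk
  -- any two cells with hook h are equal iff same row
  have hinj : ∀ s ∈ T, ∀ t ∈ T, s.1 = t.1 → s = t := by
    intro s hs t ht he
    obtain ⟨hsc, hse⟩ := hmem s hs
    obtain ⟨htc, hte⟩ := hmem t ht
    exact rowinj l h hsc htc hse hte he
  have hdec : ∀ s ∈ T, ∀ t ∈ T, s.1 < t.1 → t.2 < s.2 := by
    intro s hs t ht hl
    obtain ⟨hsc, hse⟩ := hmem s hs
    obtain ⟨htc, hte⟩ := hmem t ht
    exact step3 l h hsc htc hse hte hl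
  -- column bound
  have hcol : ∀ s ∈ T, (T.filter (fun t => s.1 ≤ t.1)).card ≤ s.2 := by
    intro s hs
    have hle : (T.filter (fun t => s.1 ≤ t.1)).card ≤ (Finset.Icc 1 s.2).card := by
      apply Finset.card_le_card_of_injOn (fun t => t.2)
      · intro t htm
        simp only [Finset.mem_coe, mem_filter] at htm
        obtain ⟨htT, hle⟩ := htm
        have h1 := (mem_cells_facts l (hmem t htT).1).2.2.1
        simp only [Finset.mem_coe, mem_Icc]
        refine ⟨h1, ?_⟩
        rcases eq_or_lt_of_le hle with heq | hlt
        · have := hinj s hs t htT heq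
          rw [← this]
        · exact le_of_lt (hdec s hs t htT hlt)
      · intro t ht t' ht' heq
        simp only [Finset.coe_filter, Set.mem_setOf_eq] at ht ht'
        rcases lt_trichotomy t.1 t'.1 with hl | hl | hl
        · exfalso; have := hdec t ht.1 t' ht'.1 hl; simp only at heq; omega
        · exact hinj t ht.1 t' ht'.1 hl
        · exfalso; have := hdec t' ht'.1 t ht.1 hl; simp only at heq; omega
    simpa using hle
  -- double counting: k^2 ≤ 2 * A
  have expand : ∀ s : ℕ × ℕ, (T.filter (fun t => s.1 ≤ t.1)).card
      = ∑ t ∈ T, if s.1 ≤ t.1 then 1 else 0 := fun s => Finset.card_filter _ _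
  have hA : k * k ≤ 2 * ∑ s ∈ T, (T.filter (fun t => s.1 ≤ t.1)).card := by
    have pt : ∀ s t : ℕ × ℕ,
        (1 : ℕ) ≤ (if s.1 ≤ t.1 then 1 else 0) + (if t.1 ≤ s.1 then 1 else 0) := by
      intro s t; rcases le_total s.1 t.1 with hc | hc <;> simp [hc]
    calc k * k = ∑ _s ∈ T, ∑ _t ∈ T, 1 := by
          simp [Finset.sum_const, smul_eq_mul, hk]
      _ ≤ ∑ s ∈ T, ∑ t ∈ T, ((if s.1 ≤ t.1 then 1 else 0) + (if t.1 ≤ s.1 then 1 else 0)) :=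
          Finset.sum_le_sum fun s _ => Finset.sum_le_sum fun t _ => pt s t
      _ = (∑ s ∈ T, ∑ t ∈ T, if s.1 ≤ t.1 then 1 else 0)
          + ∑ s ∈ T, ∑ t ∈ T, if t.1 ≤ s.1 then 1 else 0 := by
          rw [← Finset.sum_add_distrib]
          exact Finset.sum_congr rfl fun s _ => Finset.sum_add_distrib
      _ = 2 * ∑ s ∈ T, (T.filter (fun t => s.1 ≤ t.1)).card := by
          rw [Finset.sum_comm (s := T) (t := T) (f := fun s t => if t.1 ≤ s.1 then 1 else 0)]
          simp only [expand]; ring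
  -- A ≤ n
  have hAn : ∑ s ∈ T, (T.filter (fun t => s.1 ≤ t.1)).card ≤ n := by
    calc ∑ s ∈ T, (T.filter (fun t => s.1 ≤ t.1)).card ≤ ∑ s ∈ T, s.2 :=
          Finset.sum_le_sum hcol
      _ ≤ ∑ s ∈ T, rowLen l s.1 :=
          Finset.sum_le_sum fun s hs => (mem_cells_facts l (hmem s hs).1).2.2.2.2.1
      _ = ∑ i ∈ T.image Prod.fst, rowLen l i := by
          rw [Finset.sum_image (fun x hx y hy hxy => hinj x hx y hy hxy)]
      _ ≤ ∑ i ∈ Finset.Icc 1 n, rowLen l i := by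
          apply Finset.sum_le_sum_of_subset
          intro i hi
          simp only [Finset.mem_image] at hi
          obtain ⟨s, hs, rfl⟩ := hi
          have := mem_cells_facts l (hmem s hs).1
          simp only [mem_Icc]; omega
      _ = n := sum_rowLen l
  have hfin : k * k ≤ 2 * n := le_trans hA (by omega)
  have hk0 : (0 : ℝ) ≤ (k : ℝ) := Nat.cast_nonneg k
  rw [Real.le_sqrt hk0 (by positivity)]
  have : ((k * k : ℕ) : ℝ) ≤ ((2 * n : ℕ) : ℝ) := Nat.cast_le.mpr hfin
  push_cast at this
  nlinarith [this]
end

section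
/- For real q ≥ 2 and integer n ≥ 1, z(n,q) satisfies the recurrence z(n,q) = (1/(q^n - 1)) ∑_{i=1}^n z(n-i,q) / (1/q)_i, where z(0,q) = 1 and (1/q)_i = ∏_{k=1}^i (1 - 1/q^k), and z(n,q) denotes the coefficient of u^n in ∏_{i≥1} ∏_{j≥0} 1/(1 - u/q^{i+j}). -/
open Finset

namespace ZRec
open Finsupp ENNReal
noncomputable section
variable {α β γ : Type*}

abbrev deg (f : α →₀ ℕ) : ℕ := f.sum fun _ k => k

lemma deg_eq_card (f : α →₀ ℕ) : deg f = Multiset.card f.toMultiset := by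
  rw [Finsupp.card_toMultiset]; rfl

lemma eq_zero_of_deg_eq_zero {f : α →₀ ℕ} (h : deg f = 0) : f = 0 := by
  classical
  rw [deg_eq_card, Multiset.card_eq_zero] at h
  ext a
  rw [← Finsupp.count_toMultiset, h]
  simp

def term (w : α → ℝ≥0∞) (f : α →₀ ℕ) : ℝ≥0∞ := ∏ p ∈ f.support, (w p) ^ (f p)

def S (w : α → ℝ≥0∞) (n : ℕ) : ℝ≥0∞ := ∑' f : {f : α →₀ ℕ // deg f = n}, term w f.1

lemma S_zero (w : α → ℝ≥0∞) : S w 0 = 1 := by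
  have h0 : deg (0 : α →₀ ℕ) = 0 := by simp [deg]
  rw [S, tsum_eq_single (⟨0, h0⟩ : {f : α →₀ ℕ // deg f = 0})]
  · simp [term]
  · intro b hb
    exact absurd (Subtype.ext (eq_zero_of_deg_eq_zero b.2)) hb

lemma prod_sumElim {N : Type*} [CommMonoid N] (g : β →₀ ℕ) (h : γ →₀ ℕ)
    (F : β ⊕ γ → ℕ → N) (hF : ∀ p, F p 0 = 1) :
    (g.sumElim h).prod F =
      (g.prod fun b k => F (Sum.inl b) k) * (h.prod fun c k => F (Sum.inr c) k) := by
  classical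
  have hsub : (g.sumElim h).support ⊆
      g.support.map ⟨Sum.inl, Sum.inl_injective⟩ ∪ h.support.map ⟨Sum.inr, Sum.inr_injective⟩ := by
    intro p hp
    rw [Finsupp.mem_support_iff] at hp
    rcases p with b | c
    · simp only [Finsupp.sumElim_inl] at hp
      simp [Finsupp.mem_support_iff, hp]
    · simp only [Finsupp.sumElim_inr] at hp
      simp [Finsupp.mem_support_iff, hp]
  rw [Finsupp.prod_of_support_subset _ hsub F (fun i _ => hF i)]
  have hdisj : Disjoint (g.support.map ⟨Sum.inl, Sum.inl_injective⟩)
      (h.support.map ⟨Sum.inr, Sum.inr_injective⟩) := by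
    simp only [Finset.disjoint_left, Finset.mem_map, Function.Embedding.coeFn_mk]
    rintro p ⟨b, _, rfl⟩ ⟨c, _, hc⟩
    exact Sum.inl_ne_inr hc.symm
  rw [Finset.prod_union hdisj, Finset.prod_map, Finset.prod_map]
  simp only [Function.Embedding.coeFn_mk, Finsupp.sumElim_inl, Finsupp.sumElim_inr]
  rfl

lemma deg_sumElim (g : β →₀ ℕ) (h : γ →₀ ℕ) : deg (g.sumElim h) = deg g + deg h := by
  classical
  have hsub : (g.sumElim h).support ⊆
      g.support.map ⟨Sum.inl, Sum.inl_injective⟩ ∪ h.support.map ⟨Sum.inr, Sum.inr_injective⟩ := by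
    intro p hp
    rw [Finsupp.mem_support_iff] at hp
    rcases p with b | c
    · simp only [Finsupp.sumElim_inl] at hp
      simp [Finsupp.mem_support_iff, hp]
    · simp only [Finsupp.sumElim_inr] at hp
      simp [Finsupp.mem_support_iff, hp]
  rw [deg, Finsupp.sum_of_support_subset _ hsub _ (fun i _ => rfl)]
  have hdisj : Disjoint (g.support.map ⟨Sum.inl, Sum.inl_injective⟩)
      (h.support.map ⟨Sum.inr, Sum.inr_injective⟩) := by
    simp only [Finset.disjoint_left, Finset.mem_map, Function.Embedding.coeFn_mk]
    rintro p ⟨b, _, rfl⟩ ⟨c, _, hc⟩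
    exact Sum.inl_ne_inr hc.symm
  rw [Finset.sum_union hdisj, Finset.sum_map, Finset.sum_map]
  simp only [Function.Embedding.coeFn_mk, Finsupp.sumElim_inl, Finsupp.sumElim_inr]
  rfl

lemma S_eq_tsum_ite (w : α → ℝ≥0∞) (n : ℕ) :
    S w n = ∑' f : α →₀ ℕ, if deg f = n then term w f else 0 := by
  rw [S]
  have h0 : ∑' f : {f : α →₀ ℕ // deg f = n}, term w f.1
      = ∑' x : ({f : α →₀ ℕ | deg f = n} : Set _), term w x := rfl
  rw [h0, tsum_subtype {f : α →₀ ℕ | deg f = n} (term w)]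
  exact tsum_congr fun f => by
    by_cases h : deg f = n <;> simp [Set.indicator_apply, Set.mem_setOf_eq, h]

lemma term_sumElim (w : β ⊕ γ → ℝ≥0∞) (g : β →₀ ℕ) (h : γ →₀ ℕ) :
    term w (g.sumElim h) =
      term (fun b => w (Sum.inl b)) g * term (fun c => w (Sum.inr c)) h :=
  prod_sumElim g h (fun p k => w p ^ k) (fun p => pow_zero _)

lemma tsum_finsum {ι : Type*} (s : Finset ι) (f : ι → (γ →₀ ℕ) → ℝ≥0∞) :
    ∑' b, ∑ i ∈ s, f i b = ∑ i ∈ s, ∑' b, f i b :=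
  Summable.tsum_finsetSum (fun _ _ => ENNReal.summable)

lemma S_split (w : β ⊕ γ → ℝ≥0∞) (n : ℕ) :
    S w n = ∑ i ∈ Finset.range (n+1),
      S (fun b => w (Sum.inl b)) i * S (fun c => w (Sum.inr c)) (n - i) := by
  classical
  rw [S_eq_tsum_ite]
  rw [← Equiv.tsum_eq Finsupp.sumFinsuppEquivProdFinsupp.symm
    (fun f => if deg f = n then term w f else 0)]
  rw [ENNReal.tsum_prod']
  have key : ∀ (g : β →₀ ℕ) (h : γ →₀ ℕ),
      (if deg (Finsupp.sumFinsuppEquivProdFinsupp.symm (g, h)) = n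
        then term w (Finsupp.sumFinsuppEquivProdFinsupp.symm (g, h)) else 0)
      = ∑ i ∈ Finset.range (n+1),
          (if deg g = i then term (fun b => w (Sum.inl b)) g else 0) *
          (if deg h = n - i then term (fun c => w (Sum.inr c)) h else 0) := by
    intro g h
    have he : Finsupp.sumFinsuppEquivProdFinsupp.symm ((g, h) : (β →₀ ℕ) × (γ →₀ ℕ))
        = g.sumElim h := rfl
    rw [he, deg_sumElim, term_sumElim]
    by_cases hg : deg g ≤ n
    · rw [Finset.sum_eq_single (deg g)]
      · by_cases h1 : deg g + deg h = n
        · rw [if_pos h1, if_pos rfl, if_pos (by omega)]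
        · rw [if_neg h1, if_pos rfl, if_neg (by omega), mul_zero]
      · intro b _ hb
        rw [if_neg (fun hh => hb hh.symm), zero_mul]
      · intro hmem
        simp at hmem; omega
    · rw [if_neg (by omega)]
      refine (Finset.sum_eq_zero fun i hi => ?_).symm
      simp only [Finset.mem_range] at hi
      rw [if_neg (by omega), zero_mul]
  simp_rw [key, tsum_finsum]
  refine Finset.sum_congr rfl fun i _ => ?_
  simp_rw [ENNReal.tsum_mul_left, ENNReal.tsum_mul_right, ← S_eq_tsum_ite]

lemma term_smul (c : ℝ≥0∞) (w : α → ℝ≥0∞) (f : α →₀ ℕ) :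
    term (fun a => c * w a) f = c ^ deg f * term w f := by
  unfold term
  rw [deg, Finsupp.sum]
  simp_rw [mul_pow]
  rw [Finset.prod_mul_distrib, Finset.prod_pow_eq_pow_sum]

lemma S_smul (c : ℝ≥0∞) (w : α → ℝ≥0∞) (n : ℕ) :
    S (fun a => c * w a) n = c ^ n * S w n := by
  rw [S, S, ← ENNReal.tsum_mul_left]
  exact tsum_congr fun f => by rw [term_smul, f.2]

lemma S_one (m : ℕ) : S (fun _ : Unit => (1 : ℝ≥0∞)) m = 1 := by
  have hdeg : ∀ f : Unit →₀ ℕ, deg f = f () := by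
    intro f
    conv_lhs => rw [f.unique_single]
    rw [deg, Finsupp.sum_single_index]; rfl
  have hterm : ∀ f : Unit →₀ ℕ, term (fun _ : Unit => (1 : ℝ≥0∞)) f = 1 := by
    intro f; simp [term]
  have hm : deg (Finsupp.single () m) = m := by
    rw [hdeg]; simp
  rw [S, tsum_eq_single (⟨Finsupp.single () m, hm⟩ : {f : Unit →₀ ℕ // deg f = m})]
  · exact hterm _
  · intro b hb
    exfalso
    apply hb
    apply Subtype.ext
    have : b.1 () = m := by rw [← hdeg]; exact b.2
    conv_lhs => rw [b.1.unique_single]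
    rw [this]

lemma S_reindex (e : α ≃ β) (w : β → ℝ≥0∞) (n : ℕ) :
    S (fun a => w (e a)) n = S w n := by
  classical
  rw [S_eq_tsum_ite, S_eq_tsum_ite]
  rw [← Equiv.tsum_eq (Finsupp.equivCongrLeft e)
    (fun f => if deg f = n then term w f else 0)]
  refine tsum_congr fun f => ?_
  have h1 : (Finsupp.equivCongrLeft e f : β →₀ ℕ) = f.mapDomain e := by
    simp [Finsupp.equivCongrLeft, Finsupp.equivMapDomain_eq_mapDomain]
  have hdeg : deg (Finsupp.equivCongrLeft e f : β →₀ ℕ) = deg f := by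
    rw [h1, deg, deg, Finsupp.sum_mapDomain_index_inj e.injective]
  have hterm : term w (Finsupp.equivCongrLeft e f : β →₀ ℕ)
      = term (fun a => w (e a)) f := by
    rw [h1]
    show (f.mapDomain e).prod (fun p k => w p ^ k) = f.prod (fun a k => w (e a) ^ k)
    exact Finsupp.prod_mapDomain_index_inj e.injective
  rw [hdeg, hterm]

lemma tsum_pi_fin (w : α → ℝ≥0∞) (n : ℕ) :
    ∑' v : Fin n → α, ∏ t, w (v t) = (∑' a, w a) ^ n := by
  induction n with
  | zero =>
      rw [pow_zero]
      rw [tsum_eq_single (fun t => t.elim0)]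
      · simp
      · intro b hb
        exact absurd (funext fun t => t.elim0) (Ne.symm hb)
  | succ n ih =>
      rw [← Equiv.tsum_eq (Fin.consEquiv (fun _ : Fin (n+1) => α))
        (fun v => ∏ t, w (v t))]
      rw [ENNReal.tsum_prod']
      simp_rw [Fin.consEquiv_apply, Fin.prod_univ_succ, Fin.cons_zero, Fin.cons_succ,
        ENNReal.tsum_mul_left, ENNReal.tsum_mul_right, ih, pow_succ]
      rw [mul_comm]

lemma S_le (w : α → ℝ≥0∞) (n : ℕ) : S w n ≤ (∑' a, w a) ^ n := by
  classical
  rw [← tsum_pi_fin]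
  have hlen : ∀ f : {f : α →₀ ℕ // deg f = n}, f.1.toMultiset.toList.length = n := by
    intro f
    rw [Multiset.length_toList, ← deg_eq_card, f.2]
  set ι : {f : α →₀ ℕ // deg f = n} → (Fin n → α) :=
    fun f t => f.1.toMultiset.toList.get ⟨t.1, by rw [hlen]; exact t.2⟩ with hι
  have hinj : Function.Injective ι := by
    intro f f' h
    apply Subtype.ext
    have hml : f.1.toMultiset.toList = f'.1.toMultiset.toList := by
      apply List.ext_get (by rw [hlen, hlen])
      intro i hi hi'
      have := congrFun h ⟨i, by rw [← hlen f]; exact hi⟩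
      simpa [hι] using this
    have hm : f.1.toMultiset = f'.1.toMultiset := by
      rw [← Multiset.coe_toList f.1.toMultiset, ← Multiset.coe_toList f'.1.toMultiset, hml]
    ext a
    rw [← Finsupp.count_toMultiset, ← Finsupp.count_toMultiset, hm]
  have hterm : ∀ f, term w f.1 = ∏ t : Fin n, w (ι f t) := by
    intro f
    have h1 : term w f.1 = (f.1.toMultiset.map w).prod := by
      rw [Finsupp.toMultiset_map, Finsupp.prod_toMultiset]
      show f.1.prod (fun p k => w p ^ k) = (f.1.mapDomain w).prod (fun a k => a ^ k)
      rw [Finsupp.prod_mapDomain_index (fun _ => pow_zero _) (fun _ _ _ => pow_add _ _ _)]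
    rw [h1]
    set l := f.1.toMultiset.toList with hl
    have h2 : f.1.toMultiset.map w = ((l.map w : List ℝ≥0∞) : Multiset ℝ≥0∞) := by
      rw [hl, ← Multiset.map_coe, Multiset.coe_toList]
    rw [h2, Multiset.prod_coe]
    have h3 : l.map w = List.ofFn (fun s : Fin l.length => w (l.get s)) := by
      conv_lhs => rw [← List.ofFn_get l]
      rw [List.map_ofFn]
      rfl
    rw [h3, List.prod_ofFn]
    exact Fintype.prod_equiv (finCongr (hlen f)) (fun s => w (l.get s))
      (fun t => w (ι f t)) (fun s => rfl)
  calc S w n = ∑' f, ∏ t : Fin n, w (ι f t) := tsum_congr hterm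
    _ ≤ _ := ENNReal.tsum_comp_le_tsum_of_injective hinj _

/-! ### Concrete setting -/

def natE : ℕ ≃ Unit ⊕ ℕ where
  toFun n := match n with | 0 => Sum.inl () | (k+1) => Sum.inr k
  invFun := Sum.elim (fun _ => 0) (· + 1)
  left_inv n := by cases n <;> rfl
  right_inv s := by rcases s with _ | k <;> rfl

def pairE : ℕ × ℕ ≃ ℕ ⊕ ℕ × ℕ where
  toFun p := match p with | (0, j) => Sum.inl j | (i+1, j) => Sum.inr (i, j)
  invFun := Sum.elim (fun j => (0, j)) (fun p => (p.1+1, p.2))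
  left_inv p := by rcases p with ⟨_ | i, j⟩ <;> rfl
  right_inv s := by rcases s with j | ⟨i, j⟩ <;> rfl

def EE (q : ℝ) (m : ℕ) : ℝ≥0∞ := S (fun j : ℕ => ENNReal.ofReal (1/q) ^ j) m

def ZZ (q : ℝ) (n : ℕ) : ℝ≥0∞ :=
  S (fun p : ℕ × ℕ => ENNReal.ofReal (1/q) ^ (p.1 + 1 + p.2)) n

def PE (q : ℝ) (m : ℕ) : ℝ≥0∞ :=
  ∏ k ∈ Finset.Icc 1 m, (1 - ENNReal.ofReal (1/q) ^ k)

variable {q : ℝ} (hq : 2 ≤ q)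
include hq

lemma hq0 : (0:ℝ) < q := by linarith

lemma hx1 : ENNReal.ofReal (1/q) < 1 := by
  rw [ENNReal.ofReal_lt_one]
  rw [div_lt_one (hq0 hq)]
  linarith

lemma hxt : ENNReal.ofReal (1/q) ≠ ⊤ := ENNReal.ofReal_ne_top

lemma EE_rec (m : ℕ) :
    EE q m = ∑ k ∈ Finset.range (m+1), ENNReal.ofReal (1/q) ^ k * EE q k := by
  set x := ENNReal.ofReal (1/q) with hxdef
  have h0 : EE q m = S (fun j : ℕ =>
      (Sum.elim (fun _ : Unit => (1:ℝ≥0∞)) (fun j : ℕ => x * x ^ j)) (natE j)) m := by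
    unfold EE
    congr 1
    funext j
    cases j with
    | zero => exact pow_zero _
    | succ k => show x ^ (k+1) = x * x ^ k; rw [pow_succ, mul_comm]
  rw [h0, S_reindex natE, S_split]
  simp only [Sum.elim_inl, Sum.elim_inr]
  simp_rw [S_one, one_mul, S_smul]
  have hfold : ∀ k, S (fun j : ℕ => x ^ j) k = EE q k := fun k => rfl
  simp_rw [hfold]
  exact Finset.sum_range_reflect (fun k => x ^ k * EE q k) (m+1)

lemma ZZ_rec (n : ℕ) :
    ZZ q n = ∑ i ∈ Finset.range (n+1),
      (ENNReal.ofReal (1/q) ^ i * EE q i) *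
      (ENNReal.ofReal (1/q) ^ (n-i) * ZZ q (n-i)) := by
  set x := ENNReal.ofReal (1/q) with hxdef
  have h0 : ZZ q n = S (fun p : ℕ × ℕ =>
      (Sum.elim (fun j : ℕ => x * x ^ j)
        (fun p : ℕ × ℕ => x * x ^ (p.1 + 1 + p.2))) (pairE p)) n := by
    unfold ZZ
    congr 1
    funext p
    rcases p with ⟨i, j⟩
    cases i with
    | zero => show x ^ (0 + 1 + j) = x * x ^ j; ring
    | succ k => show x ^ (k + 1 + 1 + j) = x * x ^ (k + 1 + j); ring
  rw [h0, S_reindex pairE, S_split]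
  simp only [Sum.elim_inl, Sum.elim_inr]
  simp_rw [S_smul]
  rfl

lemma EE_ne_top (m : ℕ) : EE q m ≠ ⊤ := by
  have h := S_le (fun j : ℕ => ENNReal.ofReal (1/q) ^ j) m
  rw [ENNReal.tsum_geometric] at h
  refine ne_top_of_le_ne_top (ENNReal.pow_ne_top ?_) h
  rw [ENNReal.inv_ne_top]
  exact (tsub_pos_iff_lt.mpr (hx1 hq)).ne'

lemma ZZ_ne_top (n : ℕ) : ZZ q n ≠ ⊤ := by
  set x := ENNReal.ofReal (1/q) with hxdef
  have hinv : (1 - x)⁻¹ ≠ ⊤ := by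
    rw [ENNReal.inv_ne_top]
    exact (tsub_pos_iff_lt.mpr (hx1 hq)).ne'
  have h := S_le (fun p : ℕ × ℕ => x ^ (p.1 + 1 + p.2)) n
  have hsum : ∑' p : ℕ × ℕ, x ^ (p.1 + 1 + p.2) = (1 - x)⁻¹ * (x * (1 - x)⁻¹) := by
    rw [ENNReal.tsum_prod']
    have hin : ∀ i : ℕ, ∑' j : ℕ, x ^ (i + 1 + j) = x ^ i * (x * (1 - x)⁻¹) := by
      intro i
      calc ∑' j : ℕ, x ^ (i + 1 + j) = ∑' j : ℕ, (x ^ i * x) * x ^ j :=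
            tsum_congr fun j => by ring
        _ = (x ^ i * x) * ∑' j : ℕ, x ^ j := ENNReal.tsum_mul_left
        _ = x ^ i * (x * (1 - x)⁻¹) := by rw [ENNReal.tsum_geometric]; ring
    simp_rw [hin]
    rw [ENNReal.tsum_mul_right, ENNReal.tsum_geometric]
  rw [hsum] at h
  refine ne_top_of_le_ne_top (ENNReal.pow_ne_top ?_) h
  exact ENNReal.mul_ne_top hinv (ENNReal.mul_ne_top (hxt hq) hinv)

lemma xk_lt_one {k : ℕ} (hk : 1 ≤ k) : ENNReal.ofReal (1/q) ^ k < 1 := by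
  set x := ENNReal.ofReal (1/q) with hxdef
  obtain ⟨m, rfl⟩ : ∃ m, k = m + 1 := ⟨k - 1, by omega⟩
  calc x ^ (m + 1) = x ^ m * x := pow_succ x m
    _ ≤ 1 * x := mul_le_mul_left (Left.pow_le_one_of_le (hx1 hq).le m) x
    _ = x := one_mul x
    _ < 1 := hx1 hq

lemma PE_ne_zero (m : ℕ) : PE q m ≠ 0 := by
  rw [PE, Finset.prod_ne_zero_iff]
  intro k hk
  rw [Finset.mem_Icc] at hk
  exact (tsub_pos_iff_lt.mpr (xk_lt_one hq hk.1)).ne'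

lemma PE_ne_top (m : ℕ) : PE q m ≠ ⊤ :=
  ENNReal.prod_ne_top fun k _ => ne_top_of_le_ne_top one_ne_top tsub_le_self

lemma EE_closed (m : ℕ) : EE q m = (PE q m)⁻¹ := by
  induction m with
  | zero =>
      rw [show EE q 0 = 1 from S_zero _, PE, Finset.Icc_eq_empty (by omega),
        Finset.prod_empty, inv_one]
  | succ m ih =>
      set x := ENNReal.ofReal (1/q) with hxdef
      have hstep : EE q (m+1) = EE q m + x ^ (m+1) * EE q (m+1) := by
        have h := EE_rec hq (m+1)
        rw [Finset.sum_range_succ, ← EE_rec hq m] at h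
        exact h
      have hne : x ^ (m+1) * EE q (m+1) ≠ ⊤ :=
        ENNReal.mul_ne_top (ENNReal.pow_ne_top (hxt hq)) (EE_ne_top hq (m+1))
      have hsub : EE q (m+1) - x ^ (m+1) * EE q (m+1) = EE q m :=
        ENNReal.sub_eq_of_eq_add hne hstep
      have hmul : (1 - x ^ (m+1)) * EE q (m+1) = EE q m := by
        rw [ENNReal.sub_mul (fun _ _ => EE_ne_top hq (m+1)), one_mul, hsub]
      have hne0 : (1 : ℝ≥0∞) - x ^ (m+1) ≠ 0 :=
        (tsub_pos_iff_lt.mpr (xk_lt_one hq (by omega))).ne'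
      have hnet : (1 : ℝ≥0∞) - x ^ (m+1) ≠ ⊤ :=
        ne_top_of_le_ne_top one_ne_top tsub_le_self
      have hEE : EE q (m+1) = (1 - x ^ (m+1))⁻¹ * EE q m := by
        calc EE q (m+1) = ((1 - x ^ (m+1))⁻¹ * (1 - x ^ (m+1))) * EE q (m+1) := by
              rw [ENNReal.inv_mul_cancel hne0 hnet, one_mul]
          _ = (1 - x ^ (m+1))⁻¹ * ((1 - x ^ (m+1)) * EE q (m+1)) := by rw [mul_assoc]
          _ = (1 - x ^ (m+1))⁻¹ * EE q m := by rw [hmul]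
      rw [hEE, ih]
      rw [show PE q (m+1) = PE q m * (1 - x ^ (m+1)) from
        Finset.prod_Icc_succ_top (by omega) _]
      rw [ENNReal.mul_inv (Or.inl (PE_ne_zero hq m)) (Or.inl (PE_ne_top hq m)), mul_comm]

lemma main_ennreal (n : ℕ) :
    (ENNReal.ofReal q) ^ n * ZZ q n
      = ∑ i ∈ Finset.range (n+1), EE q i * ZZ q (n-i) := by
  set x := ENNReal.ofReal (1/q) with hxdef
  have h1 : ZZ q n = x ^ n * ∑ i ∈ Finset.range (n+1), EE q i * ZZ q (n-i) := by
    rw [ZZ_rec hq n, Finset.mul_sum]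
    refine Finset.sum_congr rfl fun i hi => ?_
    rw [Finset.mem_range] at hi
    have hle : i + (n - i) = n := by omega
    calc (x ^ i * EE q i) * (x ^ (n-i) * ZZ q (n-i))
        = (x ^ i * x ^ (n-i)) * (EE q i * ZZ q (n-i)) := by ring
      _ = x ^ n * (EE q i * ZZ q (n-i)) := by rw [← pow_add, hle]
  have hYx : ENNReal.ofReal q * x = 1 := by
    rw [hxdef, ← ENNReal.ofReal_mul (hq0 hq).le, mul_one_div_cancel (hq0 hq).ne',
      ENNReal.ofReal_one]
  rw [h1, ← mul_assoc, ← mul_pow, hYx, one_pow, one_mul]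

lemma PE_toReal (m : ℕ) : (PE q m).toReal = qPoch q m := by
  rw [PE, qPoch, ENNReal.toReal_prod]
  refine Finset.prod_congr rfl fun k hk => ?_
  rw [Finset.mem_Icc] at hk
  rw [ENNReal.toReal_sub_of_le (xk_lt_one hq hk.1).le ENNReal.one_ne_top,
    ENNReal.toReal_one, ENNReal.toReal_pow, ENNReal.toReal_ofReal (by positivity),
    one_div, inv_pow, ← one_div]

lemma zCoeff_eq (n : ℕ) : zCoeff n q = (ZZ q n).toReal := by
  rw [zCoeff, ZZ, S]
  rw [ENNReal.tsum_toReal_eq (f := fun f : {f : (ℕ × ℕ) →₀ ℕ // deg f = n} =>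
      term (fun p : ℕ × ℕ => ENNReal.ofReal (1/q) ^ (p.1 + 1 + p.2)) f.1)
    (fun f => WithTop.prod_ne_top fun p _ =>
      ENNReal.pow_ne_top (ENNReal.pow_ne_top ENNReal.ofReal_ne_top))]
  refine tsum_congr fun f => ?_
  rw [show term (fun p : ℕ × ℕ => ENNReal.ofReal (1/q) ^ (p.1 + 1 + p.2)) f.1
      = ∏ p ∈ (f.1 : (ℕ × ℕ) →₀ ℕ).support,
        (ENNReal.ofReal (1/q) ^ (p.1 + 1 + p.2)) ^ (f.1 p) from rfl]
  rw [ENNReal.toReal_prod]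
  refine Finset.prod_congr rfl fun p _ => ?_
  rw [ENNReal.toReal_pow, ENNReal.toReal_pow, ENNReal.toReal_ofReal (by positivity)]
  simp [one_div]

lemma main_real (n : ℕ) :
    q ^ n * zCoeff n q = ∑ i ∈ Finset.range (n+1), zCoeff (n-i) q / qPoch q i := by
  have h := congrArg ENNReal.toReal (main_ennreal hq n)
  rw [ENNReal.toReal_mul, ENNReal.toReal_pow, ENNReal.toReal_ofReal (hq0 hq).le] at h
  rw [ENNReal.toReal_sum (fun i _ => ENNReal.mul_ne_top
    (by rw [EE_closed hq]; exact ENNReal.inv_ne_top.mpr (PE_ne_zero hq i))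
    (ZZ_ne_top hq _))] at h
  rw [← zCoeff_eq hq n] at h
  rw [h]
  refine Finset.sum_congr rfl fun i _ => ?_
  rw [ENNReal.toReal_mul, EE_closed hq, ENNReal.toReal_inv, PE_toReal hq,
    ← zCoeff_eq hq, div_eq_mul_inv, mul_comm]

end
end ZRec

theorem stmt10 (q : ℝ) (hq : 2 ≤ q) (n : ℕ) (hn : 1 ≤ n) :
    zCoeff n q = (1 / (q^n - 1)) * ∑ i ∈ Finset.Icc 1 n, zCoeff (n - i) q / qPoch q i := by
  have h := ZRec.main_real hq n
  rw [Finset.sum_range_succ'] at h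
  have hpoch0 : qPoch q 0 = 1 := by
    rw [qPoch, Finset.Icc_eq_empty (by omega), Finset.prod_empty]
  rw [hpoch0, Nat.sub_zero, div_one] at h
  have hIcc : ∑ i ∈ Finset.Icc 1 n, zCoeff (n-i) q / qPoch q i
      = ∑ i ∈ Finset.range n, zCoeff (n-(i+1)) q / qPoch q (i+1) := by
    rw [← Finset.Ico_add_one_right_eq_Icc, Finset.sum_Ico_eq_sum_range]
    refine Finset.sum_congr (by norm_num) fun i _ => by rw [Nat.add_comm 1 i]
  rw [← hIcc] at h
  have hqn : (1:ℝ) < q ^ n := one_lt_pow₀ (by linarith) (by omega)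
  have hkey : (q ^ n - 1) * zCoeff n q
      = ∑ i ∈ Finset.Icc 1 n, zCoeff (n - i) q / qPoch q i := by linarith
  rw [eq_comm, ← hkey, one_div, inv_mul_cancel_left₀ (by linarith : q ^ n - 1 ≠ 0)]
end

section
/- For q > 1 and n ≥ 0, the sum over all partitions λ of n of 1/(∏_j q^{(λ'_j)^2} (1/q)_{m_j(λ)}) equals 1/(q^n (1/q)_n), where λ' is the conjugate partition, m_j(λ) is the number of parts of λ equal to j, and (1/q)_m = ∏_{k=1}^m (1 - 1/q^k). -/
open Finset

namespace Stmt11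

variable {q : ℝ}

lemma factor_pos (hq : 1 < q) {k : ℕ} (hk : 1 ≤ k) : 0 < 1 - 1/q^k := by
  have h1 : (1:ℝ) < q ^ k := one_lt_pow₀ hq (by omega)
  have : 1/q^k < 1 := by
    rw [div_lt_one (by linarith)]; exact h1
  linarith

lemma factor_le_one (hq : 1 < q) {k : ℕ} : 1 - 1/q^k ≤ 1 := by
  have : 0 < q ^ k := pow_pos (by linarith) k
  have : 0 ≤ 1/q^k := by positivity
  linarith

lemma qPoch_zero : qPoch q 0 = 1 := by simp [qPoch]

lemma qPoch_pos (hq : 1 < q) (m : ℕ) : 0 < qPoch q m := by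
  refine Finset.prod_pos fun k hk => factor_pos hq ?_
  exact (Finset.mem_Icc.mp hk).1

lemma qPoch_ne (hq : 1 < q) (m : ℕ) : qPoch q m ≠ 0 := (qPoch_pos hq m).ne'

lemma qPoch_succ (m : ℕ) : qPoch q (m+1) = qPoch q m * (1 - 1/q^(m+1)) := by
  rw [qPoch, qPoch, Finset.prod_Icc_succ_top (by omega)]

lemma qPoch_le_one (hq : 1 < q) (m : ℕ) : qPoch q m ≤ 1 := by
  refine Finset.prod_le_one (fun k hk => (factor_pos hq (Finset.mem_Icc.mp hk).1).le)
    (fun k _ => factor_le_one hq)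

lemma qPoch_anti (hq : 1 < q) : Antitone (qPoch q) := by
  refine antitone_nat_of_succ_le fun m => ?_
  rw [qPoch_succ]
  calc qPoch q m * (1 - 1/q^(m+1)) ≤ qPoch q m * 1 := by
        refine mul_le_mul_of_nonneg_left (factor_le_one hq) (qPoch_pos hq m).le
    _ = qPoch q m := mul_one _

/-- Gaussian binomial with parameter `1/q`. -/
noncomputable def gb (q : ℝ) (a b : ℕ) : ℝ :=
  if b ≤ a then qPoch q a / (qPoch q b * qPoch q (a - b)) else 0

lemma gb_of_lt {a b : ℕ} (h : a < b) : gb q a b = 0 := if_neg (by omega)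

lemma gb_eq {a b : ℕ} (h : b ≤ a) : gb q a b = qPoch q a / (qPoch q b * qPoch q (a - b)) :=
  if_pos h

lemma gb_self (hq : 1 < q) (a : ℕ) : gb q a a = 1 := by
  rw [gb_eq le_rfl, Nat.sub_self, qPoch_zero, mul_one, div_self (qPoch_ne hq a)]

lemma gb_zero_right (hq : 1 < q) (a : ℕ) : gb q a 0 = 1 := by
  rw [gb_eq (Nat.zero_le a), Nat.sub_zero, qPoch_zero, one_mul, div_self (qPoch_ne hq a)]

lemma gb_symm (hq : 1 < q) {a b : ℕ} (h : b ≤ a) : gb q a (a - b) = gb q a b := by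
  rw [gb_eq (Nat.sub_le a b), gb_eq h, Nat.sub_sub_self h, mul_comm]

lemma gb_zero_left (hq : 1 < q) (b : ℕ) : gb q 0 b = if b = 0 then 1 else 0 := by
  rcases Nat.eq_zero_or_pos b with rfl | hb
  · simp [gb_self hq]
  · rw [gb_of_lt hb, if_neg (by omega)]

lemma pascal_aux (P B C X Y S : ℝ) (hB : B ≠ 0) (hC : C ≠ 0) (hX : X ≠ 0) (hY : Y ≠ 0) :
    (P*(X+S*Y)) / ((B*Y) * (C*X)) = P / (B*Y*C) + S * (P / (B * (C*X))) := by
  field_simp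

lemma pascal (hq : 1 < q) (a b : ℕ) :
    gb q (a+1) (b+1) = gb q a (b+1) + (1/q)^(a-b) * gb q a b := by
  have hq0 : q ≠ 0 := by positivity
  rcases lt_or_ge a b with h | h
  · rw [gb_of_lt (by omega), gb_of_lt (by omega), gb_of_lt h, mul_zero, add_zero]
  rcases eq_or_lt_of_le h with rfl | hab
  · rw [gb_self hq, gb_of_lt (by omega), gb_self hq, Nat.sub_self, pow_zero, zero_add, one_mul]
  · have hb1a : b + 1 ≤ a := hab
    have e1 : a - b = a - b - 1 + 1 := by omega
    have e2 : a + 1 - (b + 1) = a - b := by omega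
    have e3 : a - (b + 1) = a - b - 1 := by omega
    have key : (1:ℝ) - 1/q^(a+1) =
        (1 - 1/q^(a-b-1+1)) + (1/q)^(a-b-1+1) * (1 - 1/q^(b+1)) := by
      have e5 : a + 1 = (a - b - 1 + 1) + (b + 1) := by omega
      rw [e5, pow_add, mul_sub, mul_one, div_pow, one_pow, one_div, one_div, one_div,
        ← mul_inv]
      ring
    rw [gb_eq (by omega : b+1 ≤ a+1), gb_eq hb1a, gb_eq h, e2, e3, e1,
      qPoch_succ a, qPoch_succ b, qPoch_succ (a-b-1), key]
    exact pascal_aux _ _ _ _ _ _ (qPoch_ne hq b) (qPoch_ne hq (a-b-1))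
      (factor_pos hq (by omega)).ne' (factor_pos hq (by omega)).ne'

lemma vander (hq : 1 < q) (b a n : ℕ) :
    gb q (a+b) n = ∑ i ∈ Finset.range (n+1),
      (1/q)^((a-i)*(n-i)) * (gb q a i * gb q b (n-i)) := by
  induction b generalizing n with
  | zero =>
      rw [Nat.add_zero]
      rw [Finset.sum_eq_single_of_mem n (Finset.self_mem_range_succ n)]
      · simp [gb_self hq]
      · intro i hi hne
        have h0 : 0 < n - i := by have := Finset.mem_range.mp hi; omega
        rw [gb_of_lt h0, mul_zero, mul_zero]
  | succ b IH =>
      rcases n with _ | m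
      · simp [gb_zero_right hq]
      · have key1 : ∀ i ∈ Finset.range (m+1),
            (1/q)^((a-i)*(m+1-i)) * (gb q a i * gb q (b+1) (m+1-i))
            = (1/q)^((a-i)*(m+1-i)) * (gb q a i * gb q b (m+1-i))
              + (1/q)^((a-i)*(m+1-i)) * (gb q a i * ((1/q)^(b-(m-i)) * gb q b (m-i))) := by
          intro i hi
          have h1 : m+1-i = (m-i)+1 := by have := Finset.mem_range.mp hi; omega
          rw [h1, pascal hq b (m-i)]
          ring
        have e1 : ∑ i ∈ Finset.range (m+1+1),
              (1/q)^((a-i)*(m+1-i)) * (gb q a i * gb q (b+1) (m+1-i))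
            = (∑ i ∈ Finset.range (m+1),
                (1/q)^((a-i)*(m+1-i)) * (gb q a i * gb q b (m+1-i)))
              + (∑ i ∈ Finset.range (m+1),
                (1/q)^((a-i)*(m+1-i)) * (gb q a i * ((1/q)^(b-(m-i)) * gb q b (m-i))))
              + (1/q)^((a-(m+1))*(m+1-(m+1))) * (gb q a (m+1) * gb q b (m+1-(m+1))) := by
          rw [Finset.sum_range_succ, Finset.sum_congr rfl key1, Finset.sum_add_distrib]
          rw [Nat.sub_self (m+1)]
          simp only [gb_zero_right hq]
        have e4 : ∑ i ∈ Finset.range (m+1),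
              (1/q)^((a-i)*(m+1-i)) * (gb q a i * ((1/q)^(b-(m-i)) * gb q b (m-i)))
            = (1/q)^((a+b)-m) * ∑ i ∈ Finset.range (m+1),
                (1/q)^((a-i)*(m-i)) * (gb q a i * gb q b (m-i)) := by
          rw [Finset.mul_sum]
          refine Finset.sum_congr rfl fun i hi => ?_
          have him : i ≤ m := by have := Finset.mem_range.mp hi; omega
          by_cases hia : i ≤ a
          · by_cases hmb : m - i ≤ b
            · have h1 : (a-i)*(m+1-i) = (a-i)*(m-i) + (a-i) := by
                have h2 : m+1-i = (m-i)+1 := by omega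
                rw [h2, Nat.mul_succ]
              have h2 : (a-i) + (b-(m-i)) = (a+b)-m := by omega
              rw [h1, pow_add, ← h2, pow_add]
              ring
            · rw [gb_of_lt (show b < m - i by omega)]
              ring
          · rw [gb_of_lt (show a < i by omega)]
            ring
        have hadd : a + (b+1) = (a+b) + 1 := rfl
        rw [hadd, pascal hq (a+b) m, e1, e4, IH (m+1), IH m, Finset.sum_range_succ]
        ring

lemma vander_sq (hq : 1 < q) (a b : ℕ) :
    gb q (a+b) a = ∑ i ∈ Finset.range (a+1), (1/q)^(i*i) * (gb q a i * gb q b i) := by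
  rw [vander hq b a a]
  conv_rhs => rw [← Finset.sum_range_reflect]
  refine Finset.sum_congr rfl fun i hi => ?_
  have hia : i ≤ a := by have := Finset.mem_range.mp hi; omega
  have h1 : a + 1 - 1 - i = a - i := by omega
  rw [h1, gb_symm hq hia]

lemma vander_sq_gen (hq : 1 < q) (a b N : ℕ) (hN : min a b ≤ N) :
    gb q (a+b) a = ∑ i ∈ Finset.range (N+1), (1/q)^(i*i) * (gb q a i * gb q b i) := by
  have key : ∀ M, min a b ≤ M → ∑ i ∈ Finset.range (M+1), (1/q)^(i*i) * (gb q a i * gb q b i)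
      = ∑ i ∈ Finset.range (min a b + 1), (1/q)^(i*i) * (gb q a i * gb q b i) := by
    intro M hM
    refine (Finset.sum_subset (Finset.range_subset_range.mpr (by omega)) fun x hx hnx => ?_).symm
    have hx1 : min a b + 1 ≤ x := by
      by_contra hc
      exact hnx (Finset.mem_range.mpr (by omega))
    rcases le_or_gt a b with hab | hab
    · rw [gb_of_lt (show a < x by omega)]; ring
    · rw [gb_of_lt (show b < x by omega)]; ring
  rw [vander_sq hq a b, key a (by omega), key N hN]

lemma dagger (hq : 1 < q) (m : ℕ) (hm : 1 ≤ m) : ∀ k : ℕ,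
    gb q (m+k-1) m = ∑ j ∈ Finset.Icc 1 k, (1/q)^(j*(j-1)) * (gb q (m-1) (j-1) * gb q k j) := by
  intro k
  induction k with
  | zero =>
      rw [show m + 0 - 1 = m - 1 by omega, gb_of_lt (show m - 1 < m by omega)]
      simp
  | succ k IH =>
      have key1 : ∀ j ∈ Finset.Icc 1 (k+1),
          (1/q)^(j*(j-1)) * (gb q (m-1) (j-1) * gb q (k+1) j)
          = (1/q)^(j*(j-1)) * (gb q (m-1) (j-1) * gb q k j)
            + (1/q)^(j*(j-1)) * (gb q (m-1) (j-1) * ((1/q)^(k-(j-1)) * gb q k (j-1))) := by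
        intro j hj
        have hj1 : 1 ≤ j := (Finset.mem_Icc.mp hj).1
        have hp := pascal hq k (j-1)
        rw [show j-1+1 = j by omega] at hp
        rw [hp]; ring
      rw [Finset.sum_congr rfl key1, Finset.sum_add_distrib]
      have e2 : ∑ j ∈ Finset.Icc 1 (k+1), (1/q)^(j*(j-1)) * (gb q (m-1) (j-1) * gb q k j)
          = gb q (m+k-1) m := by
        rw [Finset.sum_Icc_succ_top (by omega : 1 ≤ k+1), gb_of_lt (Nat.lt_succ_self k)]
        rw [← IH]; ring
      have e3 : ∑ j ∈ Finset.Icc 1 (k+1),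
            (1/q)^(j*(j-1)) * (gb q (m-1) (j-1) * ((1/q)^(k-(j-1)) * gb q k (j-1)))
          = (1/q)^k * gb q (m+k-1) (m-1) := by
        rw [← Finset.Ico_add_one_right_eq_Icc, Finset.sum_Ico_eq_sum_range, show k + 1 + 1 - 1 = k + 1 by omega]
        have e4 : ∀ i ∈ Finset.range (k+1),
            (1/q)^((1+i)*(1+i-1)) * (gb q (m-1) (1+i-1) * ((1/q)^(k-(1+i-1)) * gb q k (1+i-1)))
            = (1/q)^k * ((1/q)^(i*i) * (gb q (m-1) i * gb q k i)) := by
          intro i hi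
          have hik : i ≤ k := by have := Finset.mem_range.mp hi; omega
          rw [show 1+i-1 = i by omega]
          have hnat : (1+i)*i + (k-i) = k + i*i := by
            have h5 : (1+i)*i = i*i + i := by ring
            obtain ⟨c, hc⟩ : ∃ c, i*i = c := ⟨_, rfl⟩
            rw [h5, hc]
            omega
          rw [show ((1:ℝ)/q)^((1+i)*i) * (gb q (m-1) i * ((1/q)^(k-i) * gb q k i))
              = ((1/q)^((1+i)*i) * (1/q)^(k-i)) * (gb q (m-1) i * gb q k i) from by ring,
            ← pow_add, hnat, pow_add]
          ring
        rw [Finset.sum_congr rfl e4, ← Finset.mul_sum,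
          ← vander_sq_gen hq (m-1) k k (by omega), show m-1+k = m+k-1 by omega]
      rw [e2, e3]
      have hp := pascal hq (m+k-1) (m-1)
      rw [show m-1+1 = m by omega, show m+k-1+1 = m+(k+1)-1 by omega,
        show m+k-1-(m-1) = k by omega] at hp
      exact hp

-- ===== Part B : combinatorics =====

lemma part_le {n : ℕ} (l : n.Partition) {p : ℕ} (hp : p ∈ l.parts) : p ≤ n := by
  have h := Multiset.single_le_sum (fun x _ => Nat.zero_le x) p hp
  rwa [l.parts_sum] at h

lemma card_le {n : ℕ} (l : n.Partition) : Multiset.card l.parts ≤ n := by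
  have h := Multiset.card_nsmul_le_sum (s := l.parts) (a := 1) (fun x hx => l.parts_pos hx)
  rw [l.parts_sum] at h
  simpa using h

lemma card_pos {m : ℕ} (hm : 1 ≤ m) (l : m.Partition) : 1 ≤ Multiset.card l.parts := by
  by_contra h
  have h0 : l.parts = 0 := Multiset.card_eq_zero.mp (by omega)
  have h1 := l.parts_sum
  rw [h0] at h1
  simp at h1
  omega

lemma conjPart_zero_of_gt {n : ℕ} (l : n.Partition) {j : ℕ} (hj : n < j) : conjPart l j = 0 := by
  rw [conjPart, Multiset.countP_eq_zero]
  intro p hp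
  have := part_le l hp
  omega

lemma mult_zero_of_gt {n : ℕ} (l : n.Partition) {j : ℕ} (hj : n < j) : mult l j = 0 := by
  rw [mult, Multiset.count_eq_zero]
  intro hp
  have := part_le l hp
  omega

lemma Pden_ext (hq : 1 < q) {n : ℕ} (l : n.Partition) {M : ℕ} (hM : n ≤ M) :
    Pden q l = ∏ j ∈ Finset.Icc 1 M, q ^ ((conjPart l j)^2) * qPoch q (mult l j) := by
  rw [Pden]
  refine Finset.prod_subset (Finset.Icc_subset_Icc_right hM) fun x hx hnx => ?_
  have hx1 : n < x := by
    have h1 := Finset.mem_Icc.mp hx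
    by_contra hc
    exact hnx (Finset.mem_Icc.mpr (by omega))
  rw [conjPart_zero_of_gt l hx1, mult_zero_of_gt l hx1]
  simp [qPoch_zero]

lemma Pden_pos (hq : 1 < q) {n : ℕ} (l : n.Partition) : 0 < Pden q l :=
  Finset.prod_pos fun j _ => mul_pos (pow_pos (by linarith) _) (qPoch_pos hq _)

lemma sum_map_succ (s : Multiset ℕ) : (s.map (· + 1)).sum = s.sum + Multiset.card s := by
  induction s using Multiset.induction_on with
  | empty => simp
  | cons a s ih => simp [ih]; omega

lemma sum_map_pred (s : Multiset ℕ) (h : ∀ x ∈ s, 1 ≤ x) :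
    (s.map (· - 1)).sum + Multiset.card s = s.sum := by
  induction s using Multiset.induction_on with
  | empty => simp
  | cons a s ih =>
      have ha : 1 ≤ a := h a (Multiset.mem_cons_self a s)
      have ih' := ih (fun x hx => h x (Multiset.mem_cons_of_mem hx))
      simp only [Multiset.map_cons, Multiset.sum_cons, Multiset.card_cons]
      omega

/-- Add a column of height `j` to a partition `ν` of `m'` with at most `j` parts. -/
def ins {m m' j : ℕ} (hm : m' + j = m) (ν : m'.Partition) (hc : Multiset.card ν.parts ≤ j) :
    m.Partition where
  parts := ν.parts.map (· + 1) + Multiset.replicate (j - Multiset.card ν.parts) 1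
  parts_pos := by
    intro i hi
    rcases Multiset.mem_add.mp hi with h | h
    · obtain ⟨p, hp, rfl⟩ := Multiset.mem_map.mp h
      omega
    · rw [Multiset.eq_of_mem_replicate h]
      omega
  parts_sum := by
    rw [Multiset.sum_add, Multiset.sum_replicate, smul_eq_mul, mul_one, sum_map_succ,
      ν.parts_sum]
    omega

lemma ins_card {m m' j : ℕ} (hm : m' + j = m) (ν : m'.Partition)
    (hc : Multiset.card ν.parts ≤ j) : Multiset.card (ins hm ν hc).parts = j := by
  show Multiset.card (ν.parts.map (· + 1) + Multiset.replicate (j - Multiset.card ν.parts) 1) = j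
  rw [Multiset.card_add, Multiset.card_map, Multiset.card_replicate]
  omega

lemma ins_mult_one {m m' j : ℕ} (hm : m' + j = m) (ν : m'.Partition)
    (hc : Multiset.card ν.parts ≤ j) : mult (ins hm ν hc) 1 = j - Multiset.card ν.parts := by
  show Multiset.count 1 (ν.parts.map (· + 1) + Multiset.replicate (j - Multiset.card ν.parts) 1)
      = j - Multiset.card ν.parts
  rw [Multiset.count_add, Multiset.count_replicate, if_pos rfl]
  have h0 : Multiset.count 1 (ν.parts.map (· + 1)) = 0 := by
    rw [Multiset.count_eq_zero]
    intro h
    obtain ⟨p, hp, hpe⟩ := Multiset.mem_map.mp h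
    have := ν.parts_pos hp
    omega
  omega

lemma ins_mult_succ {m m' j : ℕ} (hm : m' + j = m) (ν : m'.Partition)
    (hc : Multiset.card ν.parts ≤ j) (i : ℕ) (hi : 1 ≤ i) :
    mult (ins hm ν hc) (i+1) = mult ν i := by
  show Multiset.count (i+1) (ν.parts.map (· + 1) + Multiset.replicate (j - Multiset.card ν.parts) 1)
      = mult ν i
  rw [Multiset.count_add, Multiset.count_replicate, if_neg (by omega)]
  have h2 : (ν.parts.map (· + 1)).count (i+1) = ν.parts.count i := by
    simpa using Multiset.count_map_eq_count' (· + 1) ν.parts (add_left_injective 1) i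
  rw [mult]
  omega

lemma ins_conj_one {m m' j : ℕ} (hm : m' + j = m) (ν : m'.Partition)
    (hc : Multiset.card ν.parts ≤ j) : conjPart (ins hm ν hc) 1 = j := by
  have hall : ∀ a ∈ (ins hm ν hc).parts, 1 ≤ a := fun a ha => (ins hm ν hc).parts_pos ha
  rw [conjPart, Multiset.countP_eq_card.mpr hall]
  exact ins_card hm ν hc

lemma ins_conj_succ {m m' j : ℕ} (hm : m' + j = m) (ν : m'.Partition)
    (hc : Multiset.card ν.parts ≤ j) (i : ℕ) (hi : 1 ≤ i) :
    conjPart (ins hm ν hc) (i+1) = conjPart ν i := by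
  rw [conjPart, conjPart]
  show Multiset.countP (fun p => i+1 ≤ p)
      (ν.parts.map (· + 1) + Multiset.replicate (j - Multiset.card ν.parts) 1) = _
  rw [Multiset.countP_add]
  have h1 : Multiset.countP (fun p => i+1 ≤ p)
      (Multiset.replicate (j - Multiset.card ν.parts) 1) = 0 := by
    rw [Multiset.countP_eq_zero]
    intro a ha
    rw [Multiset.eq_of_mem_replicate ha]
    omega
  have h2 : Multiset.countP (fun p => i+1 ≤ p) (ν.parts.map (· + 1))
      = Multiset.countP (fun p => i ≤ p) ν.parts := by
    rw [Multiset.countP_map, Multiset.countP_eq_card_filter]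
    congr 1
    apply Multiset.filter_congr
    intro p hp
    constructor <;> intro <;> omega
  omega

lemma Pden_ins (hq : 1 < q) {m m' j : ℕ} (hm : m' + j = m) (hj : 1 ≤ j) (ν : m'.Partition)
    (hc : Multiset.card ν.parts ≤ j) :
    Pden q (ins hm ν hc) = q^(j^2) * (qPoch q (j - Multiset.card ν.parts) * Pden q ν) := by
  have hm1 : 1 ≤ m := by omega
  rw [Pden, ← Finset.Ico_add_one_right_eq_Icc, Finset.prod_eq_prod_Ico_succ_bot (by omega : 1 < m + 1)]
  rw [ins_conj_one, ins_mult_one]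
  have h2 : ∏ i ∈ Finset.Ico 2 (m+1),
        q ^ ((conjPart (ins hm ν hc) i)^2) * qPoch q (mult (ins hm ν hc) i) = Pden q ν := by
    rw [Finset.prod_Ico_eq_prod_range]
    rw [Pden_ext hq ν (show m' ≤ m - 1 by omega), ← Finset.Ico_add_one_right_eq_Icc,
      Finset.prod_Ico_eq_prod_range]
    rw [show m - 1 + 1 - 1 = m - 1 by omega, show m + 1 - 2 = m - 1 by omega]
    refine Finset.prod_congr rfl fun i hi => ?_
    rw [show 2 + i = (1 + i) + 1 by omega, ins_conj_succ hm ν hc _ (by omega),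
      ins_mult_succ hm ν hc _ (by omega)]
  rw [h2]
  ring

/-- Remove the first column. -/
def strip {m m' j : ℕ} (hm : m' + j = m) (l : m.Partition)
    (hcard : Multiset.card l.parts = j) : m'.Partition where
  parts := (l.parts.filter (fun p => 2 ≤ p)).map (· - 1)
  parts_pos := by
    intro i hi
    obtain ⟨p, hp, rfl⟩ := Multiset.mem_map.mp hi
    have := (Multiset.mem_filter.mp hp).2
    omega
  parts_sum := by
    have hAB := Multiset.filter_add_not (fun p => 2 ≤ p) l.parts
    have hsum : (l.parts.filter (fun p => 2 ≤ p)).sum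
        + (l.parts.filter (fun p => ¬ 2 ≤ p)).sum = m := by
      rw [← Multiset.sum_add, hAB, l.parts_sum]
    have hcards : Multiset.card (l.parts.filter (fun p => 2 ≤ p))
        + Multiset.card (l.parts.filter (fun p => ¬ 2 ≤ p)) = j := by
      rw [← Multiset.card_add, hAB, hcard]
    have hBsum : (l.parts.filter (fun p => ¬ 2 ≤ p)).sum
        = Multiset.card (l.parts.filter (fun p => ¬ 2 ≤ p)) := by
      have hB : ∀ b ∈ l.parts.filter (fun p => ¬ 2 ≤ p), b = 1 := by
        intro b hb
        have h3 := Multiset.mem_filter.mp hb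
        have := l.parts_pos h3.1
        omega
      rw [Multiset.eq_replicate.mpr ⟨rfl, hB⟩, Multiset.sum_replicate, smul_eq_mul, mul_one]
      rw [Multiset.card_replicate]
    have h5 := sum_map_pred (l.parts.filter (fun p => 2 ≤ p))
      (fun x hx => by have := (Multiset.mem_filter.mp hx).2; omega)
    omega

lemma strip_card_le {m m' j : ℕ} (hm : m' + j = m) (l : m.Partition)
    (hcard : Multiset.card l.parts = j) : Multiset.card (strip hm l hcard).parts ≤ j := by
  show Multiset.card ((l.parts.filter (fun p => 2 ≤ p)).map (· - 1)) ≤ j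
  rw [Multiset.card_map]
  calc Multiset.card (l.parts.filter (fun p => 2 ≤ p)) ≤ Multiset.card l.parts :=
        Multiset.card_le_card (Multiset.filter_le _ _)
    _ = j := hcard

lemma ins_strip {m m' j : ℕ} (hm : m' + j = m) (l : m.Partition)
    (hcard : Multiset.card l.parts = j) :
    ins hm (strip hm l hcard) (strip_card_le hm l hcard) = l := by
  apply Nat.Partition.ext
  show ((l.parts.filter (fun p => 2 ≤ p)).map (· - 1)).map (· + 1)
      + Multiset.replicate (j - Multiset.card ((l.parts.filter (fun p => 2 ≤ p)).map (· - 1))) 1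
      = l.parts
  have hAB := Multiset.filter_add_not (fun p => 2 ≤ p) l.parts
  have h1 : ((l.parts.filter (fun p => 2 ≤ p)).map (· - 1)).map (· + 1)
      = l.parts.filter (fun p => 2 ≤ p) := by
    rw [Multiset.map_map]
    have h2 : ∀ p ∈ l.parts.filter (fun p => 2 ≤ p), ((· + 1) ∘ (· - 1)) p = id p := by
      intro p hp
      have := (Multiset.mem_filter.mp hp).2
      simp only [Function.comp_apply, id_eq]
      omega
    rw [Multiset.map_congr rfl h2, Multiset.map_id]
  have hB : ∀ b ∈ l.parts.filter (fun p => ¬ 2 ≤ p), b = 1 := by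
    intro b hb
    have h3 := Multiset.mem_filter.mp hb
    have := l.parts_pos h3.1
    omega
  have hcards : Multiset.card (l.parts.filter (fun p => 2 ≤ p))
      + Multiset.card (l.parts.filter (fun p => ¬ 2 ≤ p)) = j := by
    rw [← Multiset.card_add, hAB, hcard]
  have h4 : Multiset.replicate
      (j - Multiset.card ((l.parts.filter (fun p => 2 ≤ p)).map (· - 1))) 1
      = l.parts.filter (fun p => ¬ 2 ≤ p) := by
    rw [Multiset.card_map, show j - Multiset.card (l.parts.filter (fun p => 2 ≤ p))
      = Multiset.card (l.parts.filter (fun p => ¬ 2 ≤ p)) by omega]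
    exact (Multiset.eq_replicate.mpr ⟨rfl, hB⟩).symm
  rw [h1, h4, hAB]

lemma strip_ins {m m' j : ℕ} (hm : m' + j = m) (ν : m'.Partition)
    (hc : Multiset.card ν.parts ≤ j) :
    strip hm (ins hm ν hc) (ins_card hm ν hc) = ν := by
  apply Nat.Partition.ext
  show (((ν.parts.map (· + 1) + Multiset.replicate (j - Multiset.card ν.parts) 1).filter
      (fun p => 2 ≤ p)).map (· - 1)) = ν.parts
  rw [Multiset.filter_add]
  have h1 : (ν.parts.map (· + 1)).filter (fun p => 2 ≤ p) = ν.parts.map (· + 1) := by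
    rw [Multiset.filter_eq_self]
    intro a ha
    obtain ⟨p, hp, rfl⟩ := Multiset.mem_map.mp ha
    have := ν.parts_pos hp
    omega
  have h2 : (Multiset.replicate (j - Multiset.card ν.parts) 1).filter (fun p => 2 ≤ p) = 0 := by
    rw [Multiset.filter_eq_nil]
    intro a ha
    rw [Multiset.eq_of_mem_replicate ha]
    omega
  rw [h1, h2, add_zero, Multiset.map_map]
  have h3 : ∀ p ∈ ν.parts, ((· - 1) ∘ (· + 1)) p = id p := by
    intro p hp
    simp
  rw [Multiset.map_congr rfl h3, Multiset.map_id]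

/-- The sum `Σ(m,k)` over partitions of `m` with at most `k` parts. -/
noncomputable def Sg (q : ℝ) (m k : ℕ) : ℝ :=
  ∑ l ∈ Finset.univ.filter (fun l : m.Partition => Multiset.card l.parts ≤ k),
    1 / (qPoch q (k - Multiset.card l.parts) * Pden q l)

lemma fiber_eq (hq : 1 < q) {m m' j k : ℕ} (hm : m' + j = m) (hj1 : 1 ≤ j) :
    ∑ l ∈ Finset.univ.filter (fun l : m.Partition => Multiset.card l.parts = j),
        1 / (qPoch q (k - Multiset.card l.parts) * Pden q l)
    = (1/q)^(j^2) / qPoch q (k-j) * Sg q m' j := by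
  have hq0 : (0:ℝ) < q := by linarith
  have step2 : ∑ l ∈ Finset.univ.filter (fun l : m.Partition => Multiset.card l.parts = j),
        1 / (qPoch q (k - Multiset.card l.parts) * Pden q l)
      = ∑ ν ∈ Finset.univ.filter (fun ν : m'.Partition => Multiset.card ν.parts ≤ j),
        1 / (qPoch q (k - j) *
          (q^(j^2) * (qPoch q (j - Multiset.card ν.parts) * Pden q ν))) := by
    refine Finset.sum_bij'
      (fun l hl => strip hm l (by simpa using (Finset.mem_filter.mp hl).2))
      (fun ν hν => ins hm ν (by simpa using (Finset.mem_filter.mp hν).2)) ?_ ?_ ?_ ?_ ?_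
    · intro a ha
      simp only [Finset.mem_filter, Finset.mem_univ, true_and]
      exact strip_card_le hm a _
    · intro b hb
      simp only [Finset.mem_filter, Finset.mem_univ, true_and]
      exact ins_card hm b _
    · intro a ha
      exact ins_strip hm a _
    · intro b hb
      exact strip_ins hm b _
    · intro a ha
      have hca : Multiset.card a.parts = j := by simpa using (Finset.mem_filter.mp ha).2
      conv_lhs => rw [← ins_strip hm a (by simpa using (Finset.mem_filter.mp ha).2)]
      rw [Pden_ins hq hm hj1, ins_card]
  rw [step2, Sg, Finset.mul_sum]
  refine Finset.sum_congr rfl fun ν hν => ?_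
  have h1 := qPoch_ne hq (k - j)
  have h2 := qPoch_ne hq (j - Multiset.card ν.parts)
  have h3 := (Pden_pos hq ν).ne'
  have h4 : (q:ℝ)^(j^2) ≠ 0 := by positivity
  field_simp
  ring_nf
  rw [← mul_pow, mul_inv_cancel₀ hq0.ne', one_pow]

lemma sigma_rec (hq : 1 < q) (m k : ℕ) (hm : 1 ≤ m) :
    Sg q m k = ∑ j ∈ Finset.Icc 1 k,
      (if j ≤ m then (1/q)^(j^2) / qPoch q (k-j) * Sg q (m-j) j else 0) := by
  rw [Sg, ← Finset.sum_fiberwise_of_maps_to (g := fun l : m.Partition => Multiset.card l.parts)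
    (t := Finset.Icc 1 k) ?_]
  · refine Finset.sum_congr rfl fun j hj => ?_
    have hjk := Finset.mem_Icc.mp hj
    have hfil : (Finset.univ.filter (fun l : m.Partition => Multiset.card l.parts ≤ k)).filter
        (fun l => Multiset.card l.parts = j)
        = Finset.univ.filter (fun l : m.Partition => Multiset.card l.parts = j) := by
      rw [Finset.filter_filter]
      apply Finset.filter_congr
      intro l _
      constructor
      · exact fun h => h.2
      · exact fun h => ⟨by omega, h⟩
    rw [hfil]
    by_cases hjm : j ≤ m
    · rw [if_pos hjm]
      exact fiber_eq hq (by omega) hjk.1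
    · rw [if_neg hjm]
      rw [Finset.filter_false_of_mem, Finset.sum_empty]
      intro l _
      have := card_le l
      omega
  · intro l hl
    have h1 : Multiset.card l.parts ≤ k := by simpa using (Finset.mem_filter.mp hl).2
    exact Finset.mem_Icc.mpr ⟨card_pos hm l, h1⟩

lemma Pden_zero (l : (0:ℕ).Partition) : Pden q l = 1 := by
  rw [Pden]
  simp

lemma sigma_closed (hq : 1 < q) : ∀ m k : ℕ, Sg q m k = (1/q)^m / qPoch q k * gb q (m+k-1) m := by
  intro m
  induction m using Nat.strong_induction_on with
  | _ m IH =>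
    intro k
    rcases Nat.eq_zero_or_pos m with rfl | hm
    · rw [Sg]
      rw [show (Finset.univ.filter
          (fun l : (0:ℕ).Partition => Multiset.card l.parts ≤ k)) = Finset.univ from by
        apply Finset.filter_true_of_mem
        intro l _
        simp]
      rw [Finset.univ_unique, Finset.sum_singleton]
      simp [Pden_zero, gb_zero_right hq]
    · rw [sigma_rec hq m k hm]
      have per : ∀ j ∈ Finset.Icc 1 k,
          (if j ≤ m then (1/q)^(j^2) / qPoch q (k-j) * Sg q (m-j) j else 0)
          = (1/q)^m / qPoch q k *
            ((1/q)^(j*(j-1)) * (gb q (m-1) (j-1) * gb q k j)) := by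
        intro j hj
        have hj' := Finset.mem_Icc.mp hj
        have hj1 : 1 ≤ j := hj'.1
        have hjk : j ≤ k := hj'.2
        by_cases hjm : j ≤ m
        · rw [if_pos hjm, IH (m-j) (by omega) j, show m-j+j-1 = m-1 by omega]
          have hsym : gb q (m-1) (m-j) = gb q (m-1) (j-1) := by
            have h6 := gb_symm hq (show j-1 ≤ m-1 by omega)
            rw [show m-1-(j-1) = m-j by omega] at h6
            exact h6
          have hnat : j^2 + (m-j) = m + j*(j-1) := by
            obtain ⟨i, rfl⟩ : ∃ i, j = i+1 := ⟨j-1, by omega⟩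
            have e : (i+1)^2 = (i+1)*i + (i+1) := by ring
            rw [e, Nat.add_sub_cancel]
            obtain ⟨c, hc⟩ : ∃ c, (i+1)*i = c := ⟨_, rfl⟩
            rw [hc]
            omega
          have hpow : ((1:ℝ)/q)^(j^2) * (1/q)^(m-j) = (1/q)^m * (1/q)^(j*(j-1)) := by
            rw [← pow_add, ← pow_add, hnat]
          rw [hsym, gb_eq hjk]
          have hZ := qPoch_ne hq k
          have hY := qPoch_ne hq j
          have hX := qPoch_ne hq (k-j)
          calc (1/q)^(j^2) / qPoch q (k-j) * ((1/q)^(m-j) / qPoch q j * gb q (m-1) (j-1))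
              = ((1/q)^(j^2) * (1/q)^(m-j)) *
                (gb q (m-1) (j-1) / (qPoch q (k-j) * qPoch q j)) := by ring
            _ = ((1/q)^m * (1/q)^(j*(j-1))) *
                (gb q (m-1) (j-1) / (qPoch q (k-j) * qPoch q j)) := by rw [hpow]
            _ = (1/q)^m / qPoch q k * ((1/q)^(j*(j-1)) *
                (gb q (m-1) (j-1) * (qPoch q k / (qPoch q j * qPoch q (k-j))))) := by
                field_simp
        · rw [if_neg hjm, gb_of_lt (show m-1 < j-1 by omega)]
          ring
      rw [Finset.sum_congr rfl per, ← Finset.mul_sum, ← dagger hq m hm k]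

lemma geom_sum_le (hq : 1 < q) (m : ℕ) :
    ∑ k ∈ Finset.Icc 1 m, (1/q)^k ≤ (1/q)/(1-1/q) := by
  have ht0 : (0:ℝ) < 1/q := by positivity
  have ht1 : (1:ℝ)/q < 1 := by rw [div_lt_one (by linarith)]; linarith
  have key : ∀ m : ℕ, ∑ k ∈ Finset.Icc 1 m, (1/q)^k = ((1/q) - (1/q)^(m+1))/(1-1/q) := by
    intro m
    induction m with
    | zero => simp
    | succ m ih =>
        rw [Finset.sum_Icc_succ_top (by omega : 1 ≤ m+1), ih,
          div_add' _ _ _ (show (1:ℝ)-1/q ≠ 0 by intro h; rw [sub_eq_zero] at h; exact absurd h.symm (ne_of_lt ht1))]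
        congr 1
        ring
  rw [key m]
  apply (div_le_div_iff_of_pos_right (show (0:ℝ) < 1-1/q by linarith)).mpr
  have hp : (0:ℝ) < (1/q)^(m+1) := by positivity
  linarith

lemma qPoch_lower (hq : 1 < q) (m : ℕ) :
    Real.exp (-((1/q)/(1-1/q)^2)) ≤ qPoch q m := by
  have hq0 : (0:ℝ) < q := by linarith
  have ht0 : (0:ℝ) < 1/q := by positivity
  have ht1 : (1:ℝ)/q < 1 := by rw [div_lt_one hq0]; linarith
  have hpt : ∀ k ∈ Finset.Icc 1 m, Real.exp (-((1/q)^k/(1-1/q))) ≤ 1 - 1/q^k := by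
    intro k hk
    have hk1 : 1 ≤ k := (Finset.mem_Icc.mp hk).1
    have hx0 : (0:ℝ) < (1/q)^k := by positivity
    have hxt : (1/q:ℝ)^k ≤ 1/q := by
      calc (1/q:ℝ)^k ≤ (1/q)^1 := pow_le_pow_of_le_one (by positivity) ht1.le hk1
        _ = 1/q := pow_one _
    have hx1 : (1/q:ℝ)^k < 1 := lt_of_le_of_lt hxt ht1
    set x : ℝ := (1/q)^k with hxdef
    have h1 : (1:ℝ)/(1-x) ≤ Real.exp (x/(1-x)) := by
      have hle := Real.add_one_le_exp (x/(1-x))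
      have h2 : x/(1-x) + 1 = 1/(1-x) := by
        rw [div_add' _ _ _ (show (1:ℝ)-x ≠ 0 by linarith)]
        congr 1
        ring
      linarith
    have h3 : Real.exp (-(x/(1-x))) ≤ 1 - x := by
      rw [Real.exp_neg]
      rw [inv_le_comm₀ (Real.exp_pos _) (by linarith)]
      calc (1-x)⁻¹ = 1/(1-x) := by rw [one_div]
        _ ≤ Real.exp (x/(1-x)) := h1
    have h4 : x/(1-x) ≤ x/(1-1/q) := by
      apply div_le_div_of_nonneg_left hx0.le (by linarith) (by linarith)
    calc Real.exp (-(x/(1-1/q))) ≤ Real.exp (-(x/(1-x))) := by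
          apply Real.exp_le_exp.mpr
          linarith
      _ ≤ 1 - x := h3
      _ = 1 - 1/q^k := by rw [hxdef, div_pow, one_pow]
  calc Real.exp (-((1/q)/(1-1/q)^2))
      ≤ Real.exp (-(∑ k ∈ Finset.Icc 1 m, (1/q)^k/(1-1/q))) := by
        apply Real.exp_le_exp.mpr
        have h5 : ∑ k ∈ Finset.Icc 1 m, (1/q)^k/(1-1/q)
            = (∑ k ∈ Finset.Icc 1 m, (1/q)^k)/(1-1/q) := by
          rw [Finset.sum_div]
        rw [h5]
        have h6 := geom_sum_le hq m
        have h7 : (∑ k ∈ Finset.Icc 1 m, (1/q)^k)/(1-1/q) ≤ ((1/q)/(1-1/q))/(1-1/q) := by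
          apply (div_le_div_iff_of_pos_right (show (0:ℝ) < 1-1/q by linarith)).mpr h6
        have h8 : ((1/q:ℝ)/(1-1/q))/(1-1/q) = (1/q)/(1-1/q)^2 := by
          rw [div_div, sq]
        linarith [h7, h8.le]
    _ = ∏ k ∈ Finset.Icc 1 m, Real.exp (-((1/q)^k/(1-1/q))) := by
        rw [← Real.exp_sum]
        congr 1
        rw [← Finset.sum_neg_distrib]
    _ ≤ ∏ k ∈ Finset.Icc 1 m, (1 - 1/q^k) := by
        apply Finset.prod_le_prod (fun k _ => (Real.exp_pos _).le) hpt
    _ = qPoch q m := rfl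

end Stmt11

open Stmt11 Filter

theorem stmt11 (q : ℝ) (hq : 1 < q) (n : ℕ) :
    ∑ l : n.Partition, 1 / Pden q l = 1 / (q^n * qPoch q n) := by
  classical
  have hq0 : (0:ℝ) < q := by linarith
  have hbdd : BddBelow (Set.range (qPoch q)) :=
    ⟨Real.exp (-((1/q)/(1-1/q)^2)), by rintro x ⟨m, rfl⟩; exact qPoch_lower hq m⟩
  set L : ℝ := ⨅ m, qPoch q m with hLdef
  have hlim : Tendsto (qPoch q) atTop (nhds L) := tendsto_atTop_ciInf (qPoch_anti hq) hbdd
  have hLpos : 0 < L :=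
    lt_of_lt_of_le (Real.exp_pos _) (le_ciInf fun m => qPoch_lower hq m)
  have hLne : L ≠ 0 := hLpos.ne'
  have hA : Tendsto (fun k => ∑ l : n.Partition,
      1 / (qPoch q (k - Multiset.card l.parts) * Pden q l)) atTop
      (nhds (∑ l : n.Partition, 1 / (L * Pden q l))) := by
    apply tendsto_finset_sum
    intro l _
    have h1 : Tendsto (fun k => qPoch q (k - Multiset.card l.parts)) atTop (nhds L) :=
      hlim.comp (tendsto_sub_atTop_nat _)
    exact tendsto_const_nhds.div (h1.mul_const _)
      (mul_ne_zero hLne (Pden_pos hq l).ne')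
  have heq : (fun k => ∑ l : n.Partition,
        1 / (qPoch q (k - Multiset.card l.parts) * Pden q l))
      =ᶠ[atTop] (fun k => (1/q)^n / qPoch q k *
        (qPoch q (n+k-1) / (qPoch q n * qPoch q (k-1)))) := by
    filter_upwards [eventually_ge_atTop (max n 1)] with k hk
    have hkn : n ≤ k := le_trans (le_max_left _ _) hk
    have hk1 : 1 ≤ k := le_trans (le_max_right _ _) hk
    have e1 : ∑ l : n.Partition, 1 / (qPoch q (k - Multiset.card l.parts) * Pden q l)
        = Sg q n k := by
      rw [Sg, Finset.filter_true_of_mem (fun l _ => le_trans (card_le l) hkn)]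
    rw [e1, sigma_closed hq n k, gb_eq (show n ≤ n+k-1 by omega),
      show n+k-1-n = k-1 by omega]
  have hB : Tendsto (fun k => (1/q)^n / qPoch q k *
        (qPoch q (n+k-1) / (qPoch q n * qPoch q (k-1)))) atTop
      (nhds ((1/q)^n / L * (L / (qPoch q n * L)))) := by
    have hP1 : Tendsto (fun k => qPoch q (n+k-1)) atTop (nhds L) := by
      have hcomp : Tendsto (fun k : ℕ => n + k - 1) atTop atTop :=
        tendsto_atTop_mono (fun k => by omega : ∀ k:ℕ, k - 1 ≤ n + k - 1)
          (tendsto_sub_atTop_nat 1)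
      exact hlim.comp hcomp
    have hP2 : Tendsto (fun k => qPoch q (k-1)) atTop (nhds L) :=
      hlim.comp (tendsto_sub_atTop_nat 1)
    exact (tendsto_const_nhds.div hlim hLne).mul
      (hP1.div (hP2.const_mul (qPoch q n)) (mul_ne_zero (qPoch_ne hq n) hLne))
  have huniq := tendsto_nhds_unique (hA.congr' heq) hB
  have hsum : ∑ l : n.Partition, 1 / (L * Pden q l)
      = (1/L) * ∑ l : n.Partition, 1 / Pden q l := by
    rw [Finset.mul_sum]
    refine Finset.sum_congr rfl fun l _ => ?_
    rw [one_div, mul_inv, ← one_div, ← one_div]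
  rw [hsum] at huniq
  have hr : (1/q:ℝ)^n / L * (L / (qPoch q n * L)) = ((1/q)^n / qPoch q n) * (1/L) := by
    have hPn := qPoch_ne hq n
    field_simp
  rw [hr] at huniq
  have hG : ∑ l : n.Partition, 1 / Pden q l = (1/q)^n / qPoch q n := by
    have h2 : (1/L) ≠ 0 := by positivity
    have h3 := huniq
    rw [mul_comm (1/L) _] at h3
    exact mul_right_cancel₀ h2 h3
  rw [hG, div_pow, one_pow, div_div]
end

section
/- For any partition λ, the quantity ∏_j q^{(λ'_j)^2} (1/q)_{m_j(λ)} equals q^{|λ| + 2n(λ)} ∏_{s ∈ λ, a(s)=0} (1 - 1/q^{h(s)}), where n(λ) = ∑_i (i-1)λ_i, a(s) is the arm length, and h(s) the hook length of cell s. -/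
open Finset

section helpers
variable {n : ℕ} (l : n.Partition)

lemma conj_anti {j j' : ℕ} (h : j ≤ j') : conjPart l j' ≤ conjPart l j := by
  unfold conjPart
  induction l.parts using Multiset.induction_on with
  | empty => simp
  | cons a s ih =>
    simp only [Multiset.countP_cons]
    have : (if j' ≤ a then 1 else 0) ≤ (if j ≤ a then 1 else 0) := by
      split_ifs with h1 h2 <;> omega
    omega

lemma card_le_sum_parts (s : Multiset ℕ) (h : ∀ p ∈ s, 0 < p) : Multiset.card s ≤ s.sum := by
  induction s using Multiset.induction_on with
  | empty => simp
  | cons a s ih =>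
    simp only [Multiset.card_cons, Multiset.sum_cons]
    have ha := h a (Multiset.mem_cons_self a s)
    have := ih (fun p hp => h p (Multiset.mem_cons_of_mem hp))
    omega

lemma conj_le_n (j : ℕ) : conjPart l j ≤ n := by
  calc conjPart l j ≤ Multiset.card l.parts := Multiset.countP_le_card _ _
    _ ≤ l.parts.sum := card_le_sum_parts _ (fun _ h => l.parts_pos h)
    _ = n := l.parts_sum

lemma conj_n_succ : conjPart l (n+1) = 0 := by
  unfold conjPart
  rw [Multiset.countP_eq_zero]
  intro p hp
  have : p ≤ l.parts.sum := Multiset.le_sum_of_mem hp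
  rw [l.parts_sum] at this
  omega

lemma rowLen_le_n (i : ℕ) : rowLen l i ≤ n := by
  calc rowLen l i ≤ (Finset.Icc 1 n).card := Finset.card_filter_le _ _
    _ = n := by simp

lemma le_rowLen_iff {i j : ℕ} (hj1 : 1 ≤ j) (hjn : j ≤ n) :
    j ≤ rowLen l i ↔ i ≤ conjPart l j := by
  constructor
  · intro h
    by_contra hc
    push_neg at hc
    have hsub : (Finset.Icc 1 n).filter (fun j' => i ≤ conjPart l j') ⊆ Finset.Ico 1 j := by
      intro j' hj'
      simp only [Finset.mem_filter, Finset.mem_Icc] at hj'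
      simp only [Finset.mem_Ico]
      refine ⟨hj'.1.1, ?_⟩
      by_contra hge
      push_neg at hge
      exact absurd (hj'.2.trans (conj_anti l hge)) (by omega)
    have := Finset.card_le_card hsub
    simp only [Nat.card_Ico] at this
    unfold rowLen at h
    omega
  · intro h
    have hsub : Finset.Icc 1 j ⊆ (Finset.Icc 1 n).filter (fun j' => i ≤ conjPart l j') := by
      intro j' hj'
      simp only [Finset.mem_Icc] at hj'
      simp only [Finset.mem_filter, Finset.mem_Icc]
      exact ⟨⟨hj'.1, hj'.2.trans hjn⟩, le_trans h (conj_anti l hj'.2)⟩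
    have := Finset.card_le_card hsub
    simpa [rowLen] using this

lemma conj_split (j : ℕ) : conjPart l j = conjPart l (j+1) + mult l j := by
  unfold conjPart mult
  rw [Multiset.count]
  induction l.parts using Multiset.induction_on with
  | empty => simp
  | cons a s ih =>
    simp only [Multiset.countP_cons]
    have : (if j ≤ a then 1 else 0) = (if j+1 ≤ a then 1 else 0) + (if j = a then 1 else 0) := by
      split_ifs <;> omega
    omega

lemma sum_countP (m : ℕ) (s : Multiset ℕ) (h : ∀ p ∈ s, 1 ≤ p ∧ p ≤ m) :
    ∑ j ∈ Finset.Icc 1 m, s.countP (fun p => j ≤ p) = s.sum := by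
  induction s using Multiset.induction_on with
  | empty => simp
  | cons a s ih =>
    simp only [Multiset.countP_cons, Multiset.sum_cons, Finset.sum_add_distrib]
    have ha := h a (Multiset.mem_cons_self a s)
    have hsum : ∑ j ∈ Finset.Icc 1 m, (if j ≤ a then 1 else 0) = a := by
      rw [← Finset.sum_filter]
      have : (Finset.Icc 1 m).filter (fun j => j ≤ a) = Finset.Icc 1 a := by
        ext x; simp only [Finset.mem_filter, Finset.mem_Icc]; omega
      simp [this]
    rw [ih (fun p hp => h p (Multiset.mem_cons_of_mem hp)), hsum, Nat.add_comm]

lemma sum_conj : ∑ j ∈ Finset.Icc 1 n, conjPart l j = n := by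
  unfold conjPart
  have hmem : ∀ p ∈ l.parts, 1 ≤ p ∧ p ≤ n := by
    intro p hp
    have h1 := l.parts_pos hp
    have h2 : p ≤ l.parts.sum := Multiset.le_sum_of_mem hp
    rw [l.parts_sum] at h2
    exact ⟨h1, h2⟩
  rw [sum_countP n l.parts hmem, l.parts_sum]

lemma gauss (c : ℕ) : 2 * ∑ i ∈ Finset.Icc 1 c, (i - 1) = c * (c - 1) := by
  induction c with
  | zero => simp
  | succ c ih =>
    rw [Finset.sum_Icc_succ_top (by omega), Nat.mul_add, ih]
    cases c with
    | zero => simp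
    | succ c => simp only [Nat.succ_sub_one, Nat.add_sub_cancel]; ring

lemma sum_sq_conj : ∑ j ∈ Finset.Icc 1 n, (conjPart l j)^2 = n + 2 * nStat l := by
  have hN : nStat l = ∑ j ∈ Finset.Icc 1 n, ∑ i ∈ Finset.Icc 1 (conjPart l j), (i - 1) := by
    unfold nStat
    have : ∀ i ∈ Finset.Icc 1 n, (i - 1) * rowLen l i
        = ∑ j ∈ Finset.Icc 1 n, if i ≤ conjPart l j then (i - 1) else 0 := by
      intro i _
      rw [rowLen, Finset.card_filter, Finset.mul_sum]
      refine Finset.sum_congr rfl fun j _ => by split_ifs <;> simp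
    rw [Finset.sum_congr rfl this, Finset.sum_comm]
    refine Finset.sum_congr rfl fun j _ => ?_
    rw [← Finset.sum_filter]
    congr 1
    ext i; simp only [Finset.mem_filter, Finset.mem_Icc]
    have := conj_le_n l j
    omega
  have hpt : ∀ j ∈ Finset.Icc 1 n, (conjPart l j)^2
      = conjPart l j + 2 * ∑ i ∈ Finset.Icc 1 (conjPart l j), (i - 1) := by
    intro j _
    rw [gauss]
    generalize conjPart l j = c
    cases c with
    | zero => rfl
    | succ c => simp only [Nat.succ_sub_one]; ring
  rw [Finset.sum_congr rfl hpt, Finset.sum_add_distrib, sum_conj, hN, Finset.mul_sum]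

lemma armzero_mem {i j : ℕ} :
    (i, j) ∈ (cells l).filter (fun s => arm l s = 0) ↔
      (1 ≤ j ∧ j ≤ n) ∧ conjPart l (j+1) < i ∧ i ≤ conjPart l j := by
  rw [Finset.mem_filter, cells, Finset.mem_filter, Finset.mem_product, Finset.mem_Icc,
    Finset.mem_Icc]
  simp only [arm]
  constructor
  · rintro ⟨⟨⟨⟨hi, _⟩, hj1, hjn⟩, hle⟩, ha⟩
    have hrl : rowLen l i = j := by omega
    refine ⟨⟨hj1, hjn⟩, ?_, ?_⟩
    · by_contra hc
      push_neg at hc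
      rcases Nat.lt_or_ge (j+1) (n+1) with h | h
      · have h1 : (1:ℕ) ≤ j+1 := le_add_self
        have h2 : j+1 ≤ n := Nat.le_of_lt_succ h
        have := (le_rowLen_iff l (i := i) (j := j+1) h1 h2).mpr hc
        omega
      · have hj : j = n := by omega
        have := conj_n_succ l
        rw [hj] at hc
        omega
    · exact (le_rowLen_iff l hj1 hjn).mp (by omega)
  · rintro ⟨⟨hj1, hjn⟩, hlt, hle⟩
    have hjr : j ≤ rowLen l i := (le_rowLen_iff l hj1 hjn).mpr hle
    have hi1 : 1 ≤ i := by have := Nat.zero_le (conjPart l (j+1)); omega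
    have hin : i ≤ n := le_trans hle (conj_le_n l j)
    have hrl : rowLen l i ≤ j := by
      by_contra hc
      push_neg at hc
      rcases Nat.lt_or_ge (j+1) (n+1) with h | h
      · have h1 : (1:ℕ) ≤ j+1 := le_add_self
        have h2 : j+1 ≤ n := Nat.le_of_lt_succ h
        have := (le_rowLen_iff l (i := i) (j := j+1) h1 h2).mp (by omega : j+1 ≤ rowLen l i)
        omega
      · have hj : j = n := by omega
        have := rowLen_le_n l i
        omega
    exact ⟨⟨⟨⟨hi1, hin⟩, hj1, hjn⟩, hjr⟩, by omega⟩

lemma armzero_rowLen {i j : ℕ} (h : (i, j) ∈ (cells l).filter (fun s => arm l s = 0)) :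
    rowLen l i = j := by
  rw [Finset.mem_filter, cells, Finset.mem_filter] at h
  simp only [Finset.mem_filter, cells, Finset.mem_product, Finset.mem_Icc, arm] at h
  omega

lemma armzero_set :
    (cells l).filter (fun s => arm l s = 0) =
      (Finset.Icc 1 n).biUnion
        (fun j => (Finset.Ioc (conjPart l (j+1)) (conjPart l j)).image (fun i => (i, j))) := by
  ext ⟨i, j⟩
  rw [armzero_mem l]
  simp only [Finset.mem_biUnion, Finset.mem_Icc, Finset.mem_image, Finset.mem_Ioc, Prod.mk.injEq]
  constructor
  · rintro ⟨⟨hj1, hjn⟩, hlt, hle⟩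
    exact ⟨j, ⟨hj1, hjn⟩, i, ⟨hlt, hle⟩, rfl, rfl⟩
  · rintro ⟨j', hj', i', hi', rfl, rfl⟩
    exact ⟨hj', hi'⟩

lemma qpoch_prod (q : ℝ) :
    ∏ j ∈ Finset.Icc 1 n, qPoch q (mult l j) =
      ∏ s ∈ (cells l).filter (fun s => arm l s = 0), (1 - 1/q^(hookLen l s)) := by
  rw [armzero_set l, Finset.prod_biUnion]
  · refine Finset.prod_congr rfl fun j hj => ?_
    rw [Finset.prod_image (by intro a _ b _ h; exact (Prod.mk.injEq ..).mp h |>.1)]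
    have hsplit := conj_split l j
    rw [qPoch]
    refine Finset.prod_nbij' (fun k => conjPart l j + 1 - k) (fun i => conjPart l j + 1 - i)
      ?_ ?_ ?_ ?_ ?_ |>.symm
    · intro k hk; simp only [Finset.mem_Icc, Finset.mem_Ioc] at *; omega
    · intro i hi; simp only [Finset.mem_Icc, Finset.mem_Ioc] at *; omega
    · intro k hk; simp only [Finset.mem_Icc, Finset.mem_Ioc] at hk
      show conjPart l j + 1 - (conjPart l j + 1 - k) = k; omega
    · intro i hi; simp only [Finset.mem_Icc, Finset.mem_Ioc] at hi
      show conjPart l j + 1 - (conjPart l j + 1 - i) = i; omega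
    · intro i hi
      simp only [Finset.mem_Ioc] at hi
      have hmem : (i, j) ∈ (cells l).filter (fun s => arm l s = 0) := by
        rw [armzero_mem l]
        simp only [Finset.mem_Icc] at hj
        exact ⟨hj, hi.1, hi.2⟩
      have hrl := armzero_rowLen l hmem
      have hh : hookLen l (i, j) = conjPart l j + 1 - i := by
        simp only [hookLen, arm, leg, hrl]
        omega
      rw [hh]
  · intro a _ b _ hab
    simp only [Function.onFun, Finset.disjoint_left, Finset.mem_image, Finset.mem_Ioc]
    rintro ⟨i, j⟩ ⟨i1, _, h1⟩ ⟨i2, _, h2⟩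
    apply hab
    rw [Prod.mk.injEq] at h1 h2
    omega

end helpers

theorem stmt13 (q : ℝ) (hq : 1 < q) (n : ℕ) (l : n.Partition) :
    Pden q l =
      q ^ (n + 2 * nStat l) *
        ∏ s ∈ (cells l).filter (fun s => arm l s = 0), (1 - 1/q^(hookLen l s)) := by
  rw [Pden, Finset.prod_mul_distrib, Finset.prod_pow_eq_pow_sum, sum_sq_conj, qpoch_prod]
end
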